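/- arXiv:2502.19855 — 9 statements merged into one kernel-verified Lean document; each statement's English description precedes it below -/
import Mathlib

section
/- Let T be an A-bounded operator and q ∈ D. If λ ∈ ℂ is an A-eigenvalue of T, i.e. there exists a nonzero x in the closure of the range of A with ATx = λAx, then qλ ∈ W_{q,A}(T). -/
noncomputable section

open Filter

variable {H : Type*} [NormedAddCommGroup H] [InnerProductSpace ℂ H] [CompleteSpace H]

/-- The paper's semi-inner product `⟨x, y⟩_A = ⟨A x, y⟩`, where the inner product of the
paper is linear in the *first* argument; in Mathlib's convention this is `⟪y, A x⟫_ℂ`. -/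
def sipA (A : H →L[ℂ] H) (x y : H) : ℂ := inner ℂ y (A x)

/-- The `A`-seminorm `‖x‖_A = ⟨A x, x⟩ ^ (1/2)`. -/
def semiNormA (A : H →L[ℂ] H) (x : H) : ℝ := Real.sqrt (sipA A x x).re

/-- The `A`-`q`-numerical range `W_{q,A}(T)`. -/
def WqA (A : H →L[ℂ] H) (q : ℂ) (T : H →L[ℂ] H) : Set ℂ :=
  {z | ∃ x y : H, semiNormA A x = 1 ∧ semiNormA A y = 1 ∧ sipA A x y = q ∧ z = sipA A (T x) y}

/-- The `A`-`q`-numerical radius `w_{q,A}(T)`. -/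
def wqA (A : H →L[ℂ] H) (q : ℂ) (T : H →L[ℂ] H) : ℝ := sSup ((fun z : ℂ => ‖z‖) '' WqA A q T)

/-- The `A`-operator seminorm `‖T‖_A = sup {‖T x‖_A : ‖x‖_A ≤ 1}`. -/
def opNormA (A T : H →L[ℂ] H) : ℝ :=
  sSup ((fun x => semiNormA A (T x)) '' {x : H | semiNormA A x ≤ 1})

/-- `T` is `A`-bounded: `‖T x‖_A ≤ c ‖x‖_A` for some `c > 0`. -/
def ABounded (A T : H →L[ℂ] H) : Prop := ∃ c > 0, ∀ x : H, semiNormA A (T x) ≤ c * semiNormA A x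

local notation "⟪" x ", " y "⟫" => @inner ℂ _ _ x y

/-- Cauchy–Schwarz for the positive-operator semi-inner product. -/
lemma csA (A : H →L[ℂ] H) (hA : A.IsPositive) (u v : H) :
    ‖⟪u, A v⟫‖ * ‖⟪v, A u⟫‖ ≤ Complex.re ⟪u, A u⟫ * Complex.re ⟪v, A v⟫ := by
  have hsym : ∀ u v : H, ⟪A u, v⟫ = ⟪u, A v⟫ := fun u v =>
    (ContinuousLinearMap.isSelfAdjoint_iff_isSymmetric.mp hA.isSelfAdjoint) u v
  let core : PreInnerProductSpace.Core ℂ H :=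
    { inner := fun u v => ⟪u, A v⟫
      conj_inner_symm := fun u v => by
        show (starRingEnd ℂ) ⟪v, A u⟫ = ⟪u, A v⟫
        rw [← hsym]; exact inner_conj_symm _ _
      re_inner_nonneg := fun u => hA.re_inner_nonneg_right u
      add_left := fun u v w => inner_add_left _ _ _
      smul_left := fun u v r => inner_smul_left _ _ _ }
  exact @InnerProductSpace.Core.inner_mul_inner_self_le ℂ H _ _ _ core u v

/-- Definiteness: if the A-seminorm of `v` vanishes then `A v = 0`. -/
lemma defA (A : H →L[ℂ] H) (hA : A.IsPositive) (v : H)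
    (hv : Complex.re ⟪v, A v⟫ = 0) : A v = 0 := by
  have hsym : ∀ u v : H, ⟪A u, v⟫ = ⟪u, A v⟫ := fun u v =>
    (ContinuousLinearMap.isSelfAdjoint_iff_isSymmetric.mp hA.isSelfAdjoint) u v
  have h0 : ∀ w : H, ⟪w, A v⟫ = 0 := by
    intro w
    have hcs := csA A hA v w
    rw [hv, zero_mul] at hcs
    have hnn : ⟪w, A v⟫ = (starRingEnd ℂ) ⟪v, A w⟫ := by
      rw [← hsym v w]; exact (inner_conj_symm _ _).symm
    have hnorm : ‖⟪v, A w⟫‖ = ‖⟪w, A v⟫‖ := by rw [hnn, RCLike.norm_conj]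
    rw [hnorm] at hcs
    have := mul_self_nonneg ‖⟪w, A v⟫‖
    have : ‖⟪w, A v⟫‖ * ‖⟪w, A v⟫‖ = 0 := le_antisymm hcs this
    have := mul_self_eq_zero.mp this
    exact norm_eq_zero.mp this
  exact ext_inner_left ℂ (fun w => by rw [h0 w, inner_zero_right])

theorem stmt_1 (A : H →L[ℂ] H) (hA : A.IsPositive)
    (hrank : 2 ≤ Module.rank ℂ (LinearMap.range A.toLinearMap))
    (T : H →L[ℂ] H) (hT : ABounded A T)
    (q : ℂ) (hq : ‖q‖ ≤ 1)
    (lam : ℂ) (x : H) (hx0 : x ≠ 0)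
    (hxR : x ∈ closure ((LinearMap.range A.toLinearMap : Submodule ℂ H) : Set H))
    (hEig : A (T x) = lam • A x) :
    q * lam ∈ WqA A q T := by
  have hsym : ∀ u v : H, ⟪A u, v⟫ = ⟪u, A v⟫ := fun u v =>
    (ContinuousLinearMap.isSelfAdjoint_iff_isSymmetric.mp hA.isSelfAdjoint) u v
  have hreal : ∀ v : H, ⟪v, A v⟫ = ((Complex.re ⟪v, A v⟫ : ℝ) : ℂ) := by
    intro v
    have : (starRingEnd ℂ) ⟪v, A v⟫ = ⟪v, A v⟫ := by
      rw [inner_conj_symm]; exact hsym v v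
    exact (Complex.conj_eq_iff_re.mp this).symm
  -- positivity of ⟪x, A x⟫
  set α := Complex.re ⟪x, A x⟫ with hα_def
  have hα : 0 < α := by
    rcases (hA.re_inner_nonneg_right x).lt_or_eq with h | h
    · exact h
    exfalso
    have hAx : A x = 0 := defA A hA x h.symm
    have hperp : ∀ v ∈ (LinearMap.range A.toLinearMap : Submodule ℂ H), ⟪x, v⟫ = 0 := by
      rintro v ⟨u, rfl⟩
      show ⟪x, A u⟫ = 0
      rw [← hsym, hAx, inner_zero_left]
    have hclosed : closure ((LinearMap.range A.toLinearMap : Submodule ℂ H) : Set H)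
        ⊆ {v : H | ⟪x, v⟫ = 0} := by
      apply closure_minimal
      · intro v hv; exact hperp v hv
      · exact isClosed_eq (continuous_const.inner continuous_id) continuous_const
    have : ⟪x, x⟫ = 0 := hclosed hxR
    exact hx0 (inner_self_eq_zero.mp this)
  set m : ℝ := Real.sqrt α with hm_def
  have hm : 0 < m := Real.sqrt_pos.mpr hα
  have hm2 : m ^ 2 = α := Real.sq_sqrt hα.le
  set x₁ : H := ((m : ℂ))⁻¹ • x with hx₁_def
  clear_value x₁
  have hx₁ : ⟪x₁, A x₁⟫ = 1 := by
    rw [hx₁_def, map_smul, inner_smul_left, inner_smul_right, hreal x, ← hα_def]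
    rw [map_inv₀, Complex.conj_ofReal]
    rw [← Complex.ofReal_inv, ← Complex.ofReal_mul, ← Complex.ofReal_mul]
    norm_cast
    field_simp
    nlinarith
  -- eigenvector equation for x₁
  have hATx₁ : A (T x₁) = lam • A x₁ := by
    rw [hx₁_def, map_smul, map_smul, hEig, map_smul, smul_comm]
  -- choose u with A u outside the span of A x₁
  have hAx₁ : ∃ u : H, A u ∉ Submodule.span ℂ {A x₁} := by
    by_contra h
    push_neg at h
    have hle : LinearMap.range A.toLinearMap ≤ Submodule.span ℂ {A x₁} := by
      rintro v ⟨u, rfl⟩; exact h u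
    have h1 : Module.rank ℂ (LinearMap.range A.toLinearMap)
        ≤ Module.rank ℂ (Submodule.span ℂ {A x₁}) := Submodule.rank_mono hle
    have h2 : Module.rank ℂ (Submodule.span ℂ {A x₁}) ≤ 1 := by
      have := rank_span_le (R := ℂ) (M := H) {A x₁}
      simpa using this
    have : (2 : Cardinal) ≤ 1 := hrank.trans (h1.trans h2)
    exact absurd this (by norm_num)
  obtain ⟨u, hu⟩ := hAx₁
  set c : ℂ := ⟪x₁, A u⟫ with hc_def
  set z : H := u - c • x₁ with hz_def
  clear_value z
  have hz1 : ⟪x₁, A z⟫ = 0 := by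
    rw [hz_def, map_sub, map_smul, inner_sub_right, inner_smul_right, hx₁, ← hc_def]
    ring
  have hz2 : ⟪z, A x₁⟫ = 0 := by
    rw [← hsym, ← inner_conj_symm, hz1, map_zero]
  have hAz : A z ≠ 0 := by
    intro h
    apply hu
    have : A u = c • A x₁ := by
      have := h
      rw [hz_def, map_sub, map_smul, sub_eq_zero] at this
      exact this
    rw [this]
    exact Submodule.smul_mem _ _ (Submodule.mem_span_singleton_self _)
  set β := Complex.re ⟪z, A z⟫ with hβ_def
  have hβ : 0 < β := by
    rcases (hA.re_inner_nonneg_right z).lt_or_eq with h | h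
    · exact h
    · exact absurd (defA A hA z h.symm) hAz
  have hq2 : 0 ≤ 1 - ‖q‖ ^ 2 := by nlinarith [norm_nonneg q]
  set s : ℝ := Real.sqrt (1 - ‖q‖ ^ 2) with hs_def
  have hs2 : s ^ 2 = 1 - ‖q‖ ^ 2 := Real.sq_sqrt hq2
  set t : ℝ := s / Real.sqrt β with ht_def
  have ht2 : t ^ 2 * β = 1 - ‖q‖ ^ 2 := by
    rw [ht_def, div_pow, hs2, Real.sq_sqrt hβ.le]
    field_simp
  set y : H := (starRingEnd ℂ q) • x₁ + (t : ℂ) • z with hy_def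
  clear_value y
  have hyx : ⟪y, A x₁⟫ = q := by
    rw [hy_def, inner_add_left, inner_smul_left, inner_smul_left, hz2, hx₁]
    simp
  have hyy : ⟪y, A y⟫ = 1 := by
    rw [hy_def, map_add, map_smul, map_smul]
    rw [inner_add_left, inner_add_right, inner_add_right,
      inner_smul_left, inner_smul_left, inner_smul_left, inner_smul_left,
      inner_smul_right, inner_smul_right, inner_smul_right, inner_smul_right]
    rw [hx₁, hz1, hz2, hreal z, ← hβ_def]
    simp only [Complex.conj_ofReal, RingHomCompTriple.comp_apply, RingHom.id_apply, mul_zero,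
      mul_one, add_zero, zero_add, Complex.conj_conj]
    have h1 : q * (starRingEnd ℂ) q = ((‖q‖ ^ 2 : ℝ) : ℂ) := by
      rw [Complex.mul_conj]
      norm_cast
      exact (Complex.sq_norm q).symm
    have h2 : ((t : ℂ)) * (t : ℂ) * ((β : ℝ) : ℂ) = 1 - ((‖q‖ ^ 2 : ℝ) : ℂ) := by
      rw [show ((t : ℂ)) * (t : ℂ) * ((β : ℝ) : ℂ) = ((t ^ 2 * β : ℝ) : ℂ) by push_cast; ring,
        ht2]
      push_cast
      ring
    linear_combination h1 + h2
  refine ⟨x₁, y, ?_, ?_, ?_, ?_⟩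
  · rw [semiNormA, sipA, hx₁]; simp
  · rw [semiNormA, sipA, hyy]; simp
  · rw [sipA, hyx]
  · rw [sipA, hATx₁, inner_smul_right, hyx]; ring
end
end

section
/- Let T be an A-bounded operator and q ∈ D. If λ ∈ ℂ belongs to the A-approximate point spectrum of T, i.e. there exists a sequence (xₙ) in the closure of the range of A with ‖xₙ‖_A = 1 for all n and ‖(T − λI)xₙ‖_A → 0, then qλ belongs to the closure of W_{q,A}(T). -/
noncomputable section

open Filter

variable {H : Type*} [NormedAddCommGroup H] [InnerProductSpace ℂ H] [CompleteSpace H]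

set_option synthInstance.maxHeartbeats 2000000
set_option maxHeartbeats 2000000

/-- A positive operator on a Hilbert space has a square root (as a sesquilinear identity). -/
lemma exists_sqrtA (A : H →L[ℂ] H) (hA : A.IsPositive) :
    ∃ S : H →L[ℂ] H, ∀ u v : H, (inner ℂ u (A v) : ℂ) = inner ℂ (S u) (S v) := by
  have h0 : (0:H→L[ℂ]H) ≤ A := (ContinuousLinearMap.nonneg_iff_isPositive A).mpr hA
  refine ⟨CFC.sqrt A, fun u v => ?_⟩
  set S := CFC.sqrt A with hSdef
  have h1 : S * S = A := CFC.sqrt_mul_sqrt_self A h0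
  have h3 : S.IsPositive := (ContinuousLinearMap.nonneg_iff_isPositive S).mp (CFC.sqrt_nonneg A)
  have h4 : A v = S (S v) := by rw [← h1]; rfl
  rw [h4]; exact (h3.isSelfAdjoint.isSymmetric u (S v)).symm

theorem stmt_2 (A : H →L[ℂ] H) (hA : A.IsPositive)
    (hrank : 2 ≤ Module.rank ℂ (LinearMap.range A.toLinearMap))
    (T : H →L[ℂ] H) (hT : ABounded A T)
    (q : ℂ) (hq : ‖q‖ ≤ 1)
    (lam : ℂ) (x : ℕ → H)
    (hxR : ∀ n, x n ∈ closure ((LinearMap.range A.toLinearMap : Submodule ℂ H) : Set H))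
    (hxnorm : ∀ n, semiNormA A (x n) = 1)
    (happrox : Tendsto (fun n => semiNormA A (T (x n) - lam • x n)) atTop (nhds 0)) :
    q * lam ∈ closure (WqA A q T) := by
  obtain ⟨S, hS⟩ := exists_sqrtA A hA
  have hsip : ∀ u v : H, sipA A u v = inner ℂ (S v) (S u) := fun u v => hS v u
  have hn : ∀ v : H, semiNormA A v = ‖S v‖ := by
    intro v
    rw [semiNormA, hsip]
    rw [show ((inner ℂ (S v) (S v) : ℂ)).re = RCLike.re (inner ℂ (S v) (S v) : ℂ) from rfl]
    rw [inner_self_eq_norm_sq]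
    exact Real.sqrt_sq (norm_nonneg _)
  -- existence of an A-orthogonal, A-normalized vector
  have hzex : ∀ u : H, ∃ z : H, ‖S z‖ = 1 ∧ (inner ℂ (S z) (S u) : ℂ) = 0 := by
    intro u
    have hw : ∃ w : H, w ∈ LinearMap.range A.toLinearMap ∧ w ≠ 0 ∧
        (inner ℂ (A u) w : ℂ) = 0 := by
      by_contra hcon
      push_neg at hcon
      set f : (LinearMap.range A.toLinearMap) →ₗ[ℂ] ℂ :=
        ((innerSL ℂ (A u)).toLinearMap).comp (LinearMap.range A.toLinearMap).subtype with hf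
      have hinj : Function.Injective f := by
        rw [← LinearMap.ker_eq_bot, LinearMap.ker_eq_bot']
        intro m hm
        by_contra hm0
        have h1 : (m : H) ≠ 0 := fun h => hm0 (Subtype.ext h)
        exact hcon m m.2 h1 (by simpa [hf] using hm)
      have hr := LinearMap.lift_rank_le_of_injective f hinj
      rw [Module.rank_self] at hr
      have h2 : Cardinal.lift.{0} 2 ≤
          Cardinal.lift.{0} (Module.rank ℂ (LinearMap.range A.toLinearMap)) :=
        Cardinal.lift_le.mpr hrank
      rw [Cardinal.lift_ofNat] at h2
      have h3 := h2.trans hr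
      rw [Cardinal.lift_one] at h3
      exact absurd h3 (by norm_num)
    obtain ⟨w, hwR, hw0, hworth⟩ := hw
    have hSw : S w ≠ 0 := by
      intro h
      apply hw0
      obtain ⟨p, hp⟩ := hwR
      have hp' : A p = w := hp
      have h5 : (inner ℂ w w : ℂ) = 0 := by
        nth_rewrite 2 [← hp']
        rw [hS w p, h]
        simp
      exact inner_self_eq_zero.mp h5
    have h6 : (inner ℂ w (A u) : ℂ) = 0 := by
      have := congrArg (starRingEnd ℂ) hworth
      simpa [inner_conj_symm] using this
    have h7 : (inner ℂ (S w) (S u) : ℂ) = 0 := by rw [← hS w u]; exact h6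
    refine ⟨((‖S w‖⁻¹ : ℝ) : ℂ) • w, ?_, ?_⟩
    · rw [map_smul, norm_smul]
      simp only [Complex.norm_real, Real.norm_eq_abs, abs_of_nonneg (inv_nonneg.mpr (norm_nonneg _))]
      exact inv_mul_cancel₀ (norm_ne_zero_iff.mpr hSw)
    · rw [map_smul, inner_smul_left, h7, mul_zero]
  choose z hz1 hz2 using fun n => hzex (x n)
  -- the sequence y n
  set s : ℝ := Real.sqrt (1 - ‖q‖ ^ 2) with hs
  have hq2 : ‖q‖ ^ 2 ≤ 1 := by
    nlinarith [norm_nonneg q]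
  have hs2 : s ^ 2 = 1 - ‖q‖ ^ 2 := Real.sq_sqrt (by linarith)
  set y : ℕ → H := fun n => (starRingEnd ℂ q) • x n + (s : ℂ) • z n with hy
  have hSy : ∀ n, S (y n) = (starRingEnd ℂ q) • S (x n) + (s : ℂ) • S (z n) := by
    intro n; simp [hy, map_add, map_smul]
  have hSx1 : ∀ n, ‖S (x n)‖ = 1 := fun n => by rw [← hn]; exact hxnorm n
  have hxz : ∀ n, (inner ℂ (S (x n)) (S (z n)) : ℂ) = 0 := by
    intro n
    have := congrArg (starRingEnd ℂ) (hz2 n)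
    simpa [inner_conj_symm] using this
  have horth : ∀ n, (inner ℂ ((starRingEnd ℂ q) • S (x n)) ((s : ℂ) • S (z n)) : ℂ) = 0 := by
    intro n
    rw [inner_smul_left, inner_smul_right, hxz n]
    ring
  have hynorm2 : ∀ n, ‖S (y n)‖ ^ 2 = 1 := by
    intro n
    have hh := norm_add_sq (𝕜 := ℂ) ((starRingEnd ℂ q) • S (x n)) ((s : ℂ) • S (z n))
    rw [horth n, map_zero, mul_zero, add_zero] at hh
    have hs0 : 0 ≤ s := by rw [hs]; positivity
    rw [hSy n, hh, norm_smul, norm_smul, hSx1 n, hz1 n, mul_one, mul_one]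
    have e1 : ‖(starRingEnd ℂ) q‖ = ‖q‖ := by simp
    have e2 : ‖((s:ℝ) : ℂ)‖ = s := by
      rw [Complex.norm_real, Real.norm_eq_abs]; exact abs_of_nonneg hs0
    rw [e1, e2, hs2]
    ring
  have hynorm : ∀ n, semiNormA A (y n) = 1 := by
    intro n
    rw [hn]
    have h := hynorm2 n
    nlinarith [norm_nonneg (S (y n))]
  have hsipxy : ∀ n, sipA A (x n) (y n) = q := by
    intro n
    rw [hsip, hSy n, inner_add_left, inner_smul_left, inner_smul_left]
    rw [hz2 n, inner_self_eq_norm_sq_to_K, hSx1 n]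
    simp
  set r : ℕ → H := fun n => T (x n) - lam • x n with hr
  have hval : ∀ n, sipA A (T (x n)) (y n) = q * lam + inner ℂ (S (y n)) (S (r n)) := by
    intro n
    rw [hsip]
    have hsplit : S (T (x n)) = lam • S (x n) + S (r n) := by
      rw [show T (x n) = lam • x n + r n by simp [hr], map_add, map_smul]
    have hq' : (inner ℂ (S (y n)) (S (x n)) : ℂ) = q := by rw [← hsip]; exact hsipxy n
    rw [hsplit, inner_add_right, inner_smul_right, hq']
    ring
  have hbound : ∀ n, dist (sipA A (T (x n)) (y n)) (q * lam) ≤ semiNormA A (r n) := by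
    intro n
    rw [dist_eq_norm, hval n, add_sub_cancel_left]
    calc ‖(inner ℂ (S (y n)) (S (r n)) : ℂ)‖ ≤ ‖S (y n)‖ * ‖S (r n)‖ := norm_inner_le_norm _ _
      _ = semiNormA A (r n) := by
          rw [hn]
          have : ‖S (y n)‖ = 1 := by nlinarith [hynorm2 n, norm_nonneg (S (y n))]
          rw [this, one_mul]
  have htend : Tendsto (fun n => sipA A (T (x n)) (y n)) atTop (nhds (q * lam)) := by
    rw [tendsto_iff_dist_tendsto_zero]
    exact squeeze_zero (fun n => dist_nonneg) hbound happrox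
  exact mem_closure_of_tendsto htend
    (Eventually.of_forall fun n => ⟨x n, y n, hxnorm n, hynorm n, hsipxy n, rfl⟩)
end
end

section
/- Let T be an A-bounded operator, q ∈ D, and let U, V be bounded operators on H such that AV = U*A (V is an A-adjoint of U) and ‖Ux‖_A = ‖Vx‖_A = ‖x‖_A for all x ∈ H (U is A-unitary with V = U^#). Then W_{q,A}(U T V) = W_{q,A}(T). -/
noncomputable section

open Filter

variable {H : Type*} [NormedAddCommGroup H] [InnerProductSpace ℂ H] [CompleteSpace H]

section Aux

open ContinuousLinearMap

set_option synthInstance.maxHeartbeats 1000000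
set_option maxHeartbeats 800000

local notation "⟪" x ", " y "⟫" => @inner ℂ _ _ x y

lemma real_inner_A' (A : H →L[ℂ] H) (hA : IsSelfAdjoint A) (w : H) :
    (⟪w, A w⟫ : ℂ) = ((⟪w, A w⟫ : ℂ).re : ℂ) := by
  have h1 : (starRingEnd ℂ) ⟪w, A w⟫ = ⟪w, A w⟫ := by
    rw [inner_conj_symm]
    calc (⟪A w, w⟫ : ℂ) = ⟪(ContinuousLinearMap.adjoint A) w, w⟫ := by rw [hA.adjoint_eq]
    _ = ⟪w, A w⟫ := adjoint_inner_left A w w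
  exact (Complex.conj_eq_iff_re.mp h1).symm

lemma posApplyZero' (A : H →L[ℂ] H) (hA : A.IsPositive) (w : H)
    (hw : (⟪w, A w⟫ : ℂ).re = 0) : A w = 0 := by
  have hAnn : (0 : H →L[ℂ] H) ≤ A := (ContinuousLinearMap.nonneg_iff_isPositive A).mpr hA
  set S := CFC.sqrt A with hS
  have hSS : S * S = A := CFC.sqrt_mul_sqrt_self A hAnn
  have hSnn : (0 : H →L[ℂ] H) ≤ S := CFC.sqrt_nonneg A
  have hSsa : IsSelfAdjoint S := IsSelfAdjoint.of_nonneg hSnn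
  have h1 : (⟪w, A w⟫ : ℂ) = ⟪S w, S w⟫ := by
    have hAw : A w = (ContinuousLinearMap.adjoint S) (S w) := by
      rw [hSsa.adjoint_eq, ← hSS]; rfl
    rw [hAw, adjoint_inner_right]
  have h2 : S w = 0 := by
    have h3 := hw
    rw [h1] at h3
    have him : (⟪S w, S w⟫ : ℂ).im = 0 := inner_self_im (𝕜 := ℂ) (S w)
    exact inner_self_eq_zero.mp (Complex.ext h3 him)
  calc A w = (S * S) w := by rw [hSS]
  _ = S (S w) := rfl
  _ = 0 := by rw [h2, map_zero]

lemma pos_re_nonneg (A : H →L[ℂ] H) (hA : A.IsPositive) (w : H) :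
    0 ≤ (⟪w, A w⟫ : ℂ).re :=
  (Complex.nonneg_iff.mp (hA.inner_nonneg_right w)).1

lemma isoPolar (A W : H →L[ℂ] H) (hA : A.IsPositive)
    (hiso : ∀ x : H, semiNormA A (W x) = semiNormA A x) :
    (ContinuousLinearMap.adjoint W).comp (A.comp W) = A := by
  have hsa : IsSelfAdjoint A := hA.isSelfAdjoint
  have hdiag : ∀ w : H, (⟪W w, A (W w)⟫ : ℂ) = ⟪w, A w⟫ := by
    intro w
    have h1 := hiso w
    unfold semiNormA sipA at h1
    have h2 : (⟪W w, A (W w)⟫ : ℂ).re = (⟪w, A w⟫ : ℂ).re := by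
      have nn1 := pos_re_nonneg A hA (W w)
      have nn2 := pos_re_nonneg A hA w
      have h1sq := congrArg (fun t : ℝ => t ^ 2) h1
      simp only [Real.sq_sqrt nn1, Real.sq_sqrt nn2] at h1sq
      exact h1sq
    rw [real_inner_A' A hsa (W w), real_inner_A' A hsa w, h2]
  set D : H →L[ℂ] H := (ContinuousLinearMap.adjoint W).comp (A.comp W) - A with hD
  have hDz : ∀ x : H, (⟪D x, x⟫ : ℂ) = 0 := by
    intro x
    have h3 : (⟪D x, x⟫ : ℂ)
        = ⟪(ContinuousLinearMap.adjoint W) (A (W x)), x⟫ - ⟪A x, x⟫ := by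
      simp [hD, inner_sub_left]
    rw [h3, adjoint_inner_left]
    have h4 : (⟪A (W x), W x⟫ : ℂ) = ⟪A x, x⟫ := by
      have := congrArg (starRingEnd ℂ) (hdiag x)
      rwa [inner_conj_symm, inner_conj_symm] at this
    rw [h4, sub_self]
  have hDlin : (D : H →ₗ[ℂ] H) = 0 := (inner_map_self_eq_zero (D : H →ₗ[ℂ] H)).mp hDz
  have hD0 : D = 0 := by
    ext x
    have := congrArg (fun f : H →ₗ[ℂ] H => f x) hDlin
    simpa using this
  exact sub_eq_zero.mp hD0

end Aux

set_option synthInstance.maxHeartbeats 1000000 in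
set_option maxHeartbeats 1600000 in
theorem stmt_3 (A : H →L[ℂ] H) (hA : A.IsPositive)
    (T : H →L[ℂ] H) (hT : ABounded A T)
    (q : ℂ) (hq : ‖q‖ ≤ 1)
    (U V : H →L[ℂ] H)
    (hAdj : A.comp V = (ContinuousLinearMap.adjoint U).comp A)
    (hUiso : ∀ x : H, semiNormA A (U x) = semiNormA A x)
    (hViso : ∀ x : H, semiNormA A (V x) = semiNormA A x) :
    WqA A q (U.comp (T.comp V)) = WqA A q T := by
  have hsa : IsSelfAdjoint A := hA.isSelfAdjoint
  have hU2 := isoPolar A U hA hUiso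
  have hV2 := isoPolar A V hA hViso
  have hUp : ∀ x : H, (ContinuousLinearMap.adjoint U) (A (U x)) = A x := by
    intro x
    have := ContinuousLinearMap.ext_iff.mp hU2 x
    simpa using this
  have hVp : ∀ x : H, (ContinuousLinearMap.adjoint V) (A (V x)) = A x := by
    intro x
    have := ContinuousLinearMap.ext_iff.mp hV2 x
    simpa using this
  have hVA : ∀ z : H, (ContinuousLinearMap.adjoint V) (A z) = A (U z) := by
    intro z
    have h := congrArg ContinuousLinearMap.adjoint hAdj
    rw [ContinuousLinearMap.adjoint_comp, ContinuousLinearMap.adjoint_comp,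
      ContinuousLinearMap.adjoint_adjoint, hsa.adjoint_eq] at h
    have := ContinuousLinearMap.ext_iff.mp h z
    simpa using this
  have hAVU : ∀ x : H, A (V (U x)) = A x := by
    intro x
    have h := ContinuousLinearMap.ext_iff.mp hAdj (U x)
    simp only [ContinuousLinearMap.comp_apply] at h
    rw [h, hUp]
  -- kernel step : A (T (V (U x))) = A (T x)
  obtain ⟨c, hc, hTb⟩ := hT
  have hker : ∀ x : H, A (T (V (U x))) = A (T x) := by
    intro x
    set w := V (U x) - x with hw
    have hAw : A w = 0 := by
      simp [hw, map_sub, hAVU x]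
    have hsemw : semiNormA A w = 0 := by
      unfold semiNormA sipA
      rw [hAw]
      simp
    have hTw0 : semiNormA A (T w) = 0 := by
      have h1 := hTb w
      rw [hsemw, mul_zero] at h1
      have h2 : 0 ≤ semiNormA A (T w) := Real.sqrt_nonneg _
      linarith
    have hre0 : (inner ℂ (T w) (A (T w)) : ℂ).re = 0 := by
      unfold semiNormA sipA at hTw0
      have nn := pos_re_nonneg A hA (T w)
      have := Real.sqrt_eq_zero nn |>.mp hTw0
      exact this
    have hATw : A (T w) = 0 := posApplyZero' A hA (T w) hre0
    have hsub : A (T (V (U x))) - A (T x) = 0 := by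
      have h5 : T w = T (V (U x)) - T x := by simp [hw, map_sub]
      rw [← map_sub, ← h5, hATw]
    exact sub_eq_zero.mp hsub
  ext z
  simp only [WqA, Set.mem_setOf_eq]
  constructor
  · rintro ⟨x, y, hx, hy, hxy, hz⟩
    refine ⟨V x, V y, by rw [hViso, hx], by rw [hViso, hy], ?_, ?_⟩
    · unfold sipA at hxy ⊢
      calc (inner ℂ (V y) (A (V x)) : ℂ)
          = inner ℂ y ((ContinuousLinearMap.adjoint V) (A (V x))) :=
            (ContinuousLinearMap.adjoint_inner_right V y _).symm
        _ = inner ℂ y (A x) := by rw [hVp x]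
        _ = q := hxy
    · unfold sipA at hz ⊢
      simp only [ContinuousLinearMap.comp_apply] at hz ⊢
      rw [hz]
      calc (inner ℂ y (A (U (T (V x)))) : ℂ)
          = inner ℂ y ((ContinuousLinearMap.adjoint V) (A (T (V x)))) := by rw [hVA]
        _ = inner ℂ (V y) (A (T (V x))) := ContinuousLinearMap.adjoint_inner_right V y _
  · rintro ⟨x, y, hx, hy, hxy, hz⟩
    refine ⟨U x, U y, by rw [hUiso, hx], by rw [hUiso, hy], ?_, ?_⟩
    · unfold sipA at hxy ⊢
      calc (inner ℂ (U y) (A (U x)) : ℂ)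
          = inner ℂ y ((ContinuousLinearMap.adjoint U) (A (U x))) :=
            (ContinuousLinearMap.adjoint_inner_right U y _).symm
        _ = inner ℂ y (A x) := by rw [hUp x]
        _ = q := hxy
    · unfold sipA at hz ⊢
      simp only [ContinuousLinearMap.comp_apply]
      rw [hz]
      calc (inner ℂ y (A (T x)) : ℂ)
          = inner ℂ y (A (T (V (U x)))) := by rw [hker x]
        _ = inner ℂ y ((ContinuousLinearMap.adjoint U) (A (U (T (V (U x)))))) := by rw [hUp]
        _ = inner ℂ (U y) (A (U (T (V (U x))))) := ContinuousLinearMap.adjoint_inner_right U y _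
end
end

section
/- Let T be an A-bounded operator, suppose the range of A has dimension at least 3, and let q ∈ D. Then q·W_A(T) ⊆ W_{q,A}(T), i.e. for every x ∈ H with ‖x‖_A = 1 one has q⟨Tx,x⟩_A ∈ W_{q,A}(T). -/
noncomputable section

open Filter

variable {H : Type*} [NormedAddCommGroup H] [InnerProductSpace ℂ H] [CompleteSpace H]

lemma aux_degenerate (A : H →L[ℂ] H) (hA : A.IsPositive) (u : H)
    (h : (inner ℂ u (A u) : ℂ).re = 0) : A u = 0 := by
  have hsym : LinearMap.IsSymmetric (A : H →ₗ[ℂ] H) :=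
    ContinuousLinearMap.isSelfAdjoint_iff_isSymmetric.mp hA.isSelfAdjoint
  set s : ℝ := (inner ℂ (A (A u)) (A u) : ℂ).re with hsdef
  have hs : 0 ≤ s := hA.re_inner_nonneg_left (A u)
  set n : ℝ := ‖A u‖ ^ 2 with hn
  have h2 : (inner ℂ (A u) (A u) : ℂ) = ((n : ℝ) : ℂ) := by
    rw [inner_self_eq_norm_sq_to_K]; norm_cast
  have h3 : (inner ℂ (A (A u)) u : ℂ) = ((n : ℝ) : ℂ) := by
    have := hsym (A u) u
    simp only [ContinuousLinearMap.coe_coe] at this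
    rw [this]; exact h2
  have h1 : (inner ℂ (A u) u : ℂ).re = 0 := (inner_re_symm (𝕜 := ℂ) _ _).trans h
  have key : ∀ t : ℝ, 0 ≤ 2 * t * n + t ^ 2 * s := by
    intro t
    have h0 : 0 ≤ (inner ℂ (A (u + (t:ℂ) • A u)) (u + (t:ℂ) • A u) : ℂ).re :=
      hA.re_inner_nonneg_left _
    have hexp : (inner ℂ (A (u + (t:ℂ) • A u)) (u + (t:ℂ) • A u) : ℂ) =
        inner ℂ (A u) u + ((t:ℝ):ℂ) * inner ℂ (A u) (A u) + ((t:ℝ):ℂ) * inner ℂ (A (A u)) u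
          + ((t^2:ℝ):ℂ) * inner ℂ (A (A u)) (A u) := by
      simp only [map_add, map_smul, inner_add_left, inner_add_right, inner_smul_left,
        inner_smul_right, Complex.conj_ofReal]
      push_cast; ring
    rw [hexp] at h0
    simp only [Complex.add_re, Complex.mul_re, Complex.ofReal_re, Complex.ofReal_im,
      h2, h3, h1, zero_mul, sub_zero, zero_sub, mul_zero, add_zero, zero_add] at h0
    rw [← hsdef] at h0
    calc (0:ℝ) ≤ _ := h0
      _ = 2 * t * n + t ^ 2 * s := by ring
  have hn0 : n = 0 := by
    by_contra hne
    have hnpos : 0 < n := lt_of_le_of_ne (by positivity) (Ne.symm hne)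
    have hs1 : 0 < s + 1 := by linarith
    have hk := key (-(n/(s+1)))
    have hmul : (s+1)^2 * (2 * (-(n/(s+1))) * n + (-(n/(s+1)))^2 * s)
        = n^2 * s - 2*n^2*(s+1) := by field_simp; ring
    have h2' : 0 ≤ n^2*s - 2*n^2*(s+1) := by
      rw [← hmul]; exact mul_nonneg (sq_nonneg _) hk
    nlinarith [mul_pos hnpos hnpos]
  have : ‖A u‖ = 0 := by nlinarith [norm_nonneg (A u)]
  simpa [norm_eq_zero] using this

theorem stmt_6 (A : H →L[ℂ] H) (hA : A.IsPositive)
    (hrank : 3 ≤ Module.rank ℂ (LinearMap.range A.toLinearMap))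
    (T : H →L[ℂ] H) (hT : ABounded A T)
    (q : ℂ) (hq : ‖q‖ ≤ 1) :
    (fun z => q * z) '' {z : ℂ | ∃ x : H, semiNormA A x = 1 ∧ z = sipA A (T x) x}
      ⊆ WqA A q T := by
  rintro w ⟨z, ⟨x, hx, rfl⟩, rfl⟩
  have hsym : LinearMap.IsSymmetric (A : H →ₗ[ℂ] H) :=
    ContinuousLinearMap.isSelfAdjoint_iff_isSymmetric.mp hA.isSelfAdjoint
  have hsym' : ∀ a b : H, (inner ℂ (A a) b : ℂ) = inner ℂ a (A b) := by
    intro a b; have := hsym a b; simpa using this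
  -- realness of diagonal values
  have hreal : ∀ v : H, (inner ℂ v (A v) : ℂ) = ((inner ℂ v (A v) : ℂ).re : ℂ) := by
    intro v
    have h1 : (starRingEnd ℂ) (inner ℂ v (A v) : ℂ) = inner ℂ v (A v) := by
      rw [inner_conj_symm, hsym' v v]
    rw [Complex.conj_eq_iff_re] at h1
    exact h1.symm
  -- existence of u orthogonal to A x and A (T x) with A u ≠ 0
  set S := Submodule.span ℂ ({A x, A (T x)} : Set H) with hS
  have hfd : FiniteDimensional ℂ S := FiniteDimensional.span_of_finite ℂ (Set.toFinite _)
  have hex : ∃ u ∈ Sᗮ, A u ≠ 0 := by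
    by_contra hcon
    push_neg at hcon
    have hmapbot : Submodule.map A.toLinearMap Sᗮ = ⊥ := by
      rw [Submodule.eq_bot_iff]
      rintro y ⟨v, hv, rfl⟩
      exact hcon v hv
    have htop : S ⊔ Sᗮ = ⊤ := Submodule.sup_orthogonal_of_hasOrthogonalProjection
    have hle : LinearMap.range A.toLinearMap ≤ Submodule.map A.toLinearMap S := by
      rw [LinearMap.range_eq_map, ← htop, Submodule.map_sup, hmapbot, sup_bot_eq]
    have hr : Module.rank ℂ (LinearMap.range A.toLinearMap) ≤ 2 := by
      calc Module.rank ℂ (LinearMap.range A.toLinearMap)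
          ≤ Module.rank ℂ (Submodule.map A.toLinearMap S) := Submodule.rank_mono hle
        _ ≤ Module.rank ℂ S := rank_map_le _ _
        _ ≤ Cardinal.mk ({A x, A (T x)} : Set H) := rank_span_le _
        _ ≤ 2 := by
            refine (Cardinal.mk_insert_le).trans ?_
            simp only [Cardinal.mk_singleton]
            norm_num
    have : (3 : Cardinal) ≤ 2 := hrank.trans hr
    norm_num at this
  obtain ⟨u, huS, hau⟩ := hex
  rw [Submodule.mem_orthogonal] at huS
  have ho1 : (inner ℂ (A x) u : ℂ) = 0 :=
    huS (A x) (Submodule.subset_span (Set.mem_insert _ _))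
  have ho2 : (inner ℂ (A (T x)) u : ℂ) = 0 :=
    huS (A (T x)) (Submodule.subset_span (Set.mem_insert_of_mem _ rfl))
  have e_ux : (inner ℂ u (A x) : ℂ) = 0 := by
    rw [← inner_conj_symm, ho1, map_zero]
  have e_xu : (inner ℂ x (A u) : ℂ) = 0 := by rw [← hsym' x u]; exact ho1
  have e_uTx : (inner ℂ u (A (T x)) : ℂ) = 0 := by
    rw [← inner_conj_symm, ho2, map_zero]
  -- normalization facts
  have hx1 : (inner ℂ x (A x) : ℂ) = 1 := by
    have hre : (inner ℂ x (A x) : ℂ).re = 1 := by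
      have := hx
      unfold semiNormA sipA at this
      rwa [Real.sqrt_eq_one] at this
    rw [hreal x, hre]; norm_num
  have hupos : 0 < (inner ℂ u (A u) : ℂ).re := by
    rcases lt_or_eq_of_le (hA.re_inner_nonneg_right u) with h | h
    · exact h
    · exact absurd (aux_degenerate A hA u h.symm) hau
  set c : ℝ := Real.sqrt ((inner ℂ u (A u) : ℂ).re) with hc
  have hcpos : 0 < c := Real.sqrt_pos.mpr hupos
  have hc2 : c ^ 2 = (inner ℂ u (A u) : ℂ).re := Real.sq_sqrt hupos.le
  have hureal : (inner ℂ u (A u) : ℂ) = ((c ^ 2 : ℝ) : ℂ) := by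
    rw [hc2]; exact hreal u
  set b : ℝ := Real.sqrt (1 - ‖q‖ ^ 2) with hbdef
  have habs : ‖q‖ ^ 2 ≤ 1 := by nlinarith [norm_nonneg q]
  have hb2 : b ^ 2 = 1 - ‖q‖ ^ 2 := Real.sq_sqrt (by linarith)
  set β : ℝ := b / c with hβ
  set y : H := (starRingEnd ℂ q) • x + ((β : ℝ) : ℂ) • u with hy
  -- inner ℂ products with y
  have iy_Ax : (inner ℂ y (A x) : ℂ) = q := by
    rw [hy]
    simp only [inner_add_left, inner_smul_left, e_ux, hx1, mul_zero, mul_one, add_zero,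
      Complex.conj_conj]
  have iy_ATx : (inner ℂ y (A (T x)) : ℂ) = q * inner ℂ x (A (T x)) := by
    rw [hy]
    simp only [inner_add_left, inner_smul_left, e_uTx, mul_zero, add_zero, Complex.conj_conj]
  have iy_Ay : (inner ℂ y (A y) : ℂ) = 1 := by
    have hAy : A y = (starRingEnd ℂ q) • A x + ((β : ℝ) : ℂ) • A u := by
      rw [hy]; simp
    rw [hy, hAy]
    simp only [inner_add_left, inner_add_right, inner_smul_left, inner_smul_right,
      e_ux, e_xu, hx1, hureal, mul_zero, mul_one, add_zero, zero_add,
      Complex.conj_conj, Complex.conj_ofReal]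
    have hβc : ((β : ℝ) : ℂ) * (((β : ℝ) : ℂ) * ((c ^ 2 : ℝ) : ℂ)) = ((b ^ 2 : ℝ) : ℂ) := by
      have hcne : (c:ℂ) ≠ 0 := by exact_mod_cast hcpos.ne'
      rw [hβ]; push_cast; field_simp
    rw [hβc, mul_comm ((starRingEnd ℂ) q) q, Complex.mul_conj, hb2, Complex.normSq_eq_norm_sq]
    push_cast
    ring
  refine ⟨x, y, hx, ?_, ?_, ?_⟩
  · unfold semiNormA sipA
    rw [iy_Ay]
    norm_num
  · unfold sipA
    exact iy_Ax
  · unfold sipA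
    rw [iy_ATx]
end
end

section
/- Let T be an A-bounded operator and q ∈ D, and suppose the range of A has dimension at least 2. Then W_{q,A}(T) = { q⟨Tx,x⟩_A + √(1−|q|²)·⟨Tx,z⟩_A : x,z ∈ H, ‖x‖_A = ‖z‖_A = 1, ⟨x,z⟩_A = 0 }. -/
noncomputable section

open Filter

variable {H : Type*} [NormedAddCommGroup H] [InnerProductSpace ℂ H] [CompleteSpace H]

section aux

open ComplexConjugate

variable (A : H →L[ℂ] H)

lemma aux_symm (hA : A.IsPositive) (x y : H) :
    (inner ℂ (A x) y : ℂ) = inner ℂ x (A y) :=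
  (ContinuousLinearMap.isSelfAdjoint_iff_isSymmetric.mp hA.isSelfAdjoint) x y

lemma aux_conj (hA : A.IsPositive) (x y : H) :
    conj (inner ℂ y (A x) : ℂ) = inner ℂ x (A y) := by
  rw [inner_conj_symm, aux_symm A hA]

/-- The semi-inner-product core induced by a positive operator. -/
def coreA (hA : A.IsPositive) : PreInnerProductSpace.Core ℂ H where
  inner x y := inner ℂ x (A y)
  conj_inner_symm x y := aux_conj A hA x y
  re_inner_nonneg x := hA.re_inner_nonneg_right x
  add_left x y z := inner_add_left x y (A z)
  smul_left x y r := inner_smul_left x (A y) r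

lemma aux_cs_zero (hA : A.IsPositive) {v : H} (hv : (inner ℂ v (A v) : ℂ) = 0)
    (w : H) : (inner ℂ w (A v) : ℂ) = 0 := by
  have h := @InnerProductSpace.Core.inner_mul_inner_self_le ℂ H _ _ _ (coreA A hA) w v
  have h' : ‖(inner ℂ w (A v) : ℂ)‖ * ‖(inner ℂ v (A w) : ℂ)‖ ≤
      RCLike.re (inner ℂ w (A w) : ℂ) * RCLike.re (inner ℂ v (A v) : ℂ) := h
  rw [hv] at h'
  simp only [map_zero, mul_zero] at h'
  have hvw : (inner ℂ v (A w) : ℂ) = conj (inner ℂ w (A v) : ℂ) := (aux_conj A hA v w).symm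
  rw [hvw, RCLike.norm_conj] at h'
  have : ‖(inner ℂ w (A v) : ℂ)‖ = 0 := by nlinarith [norm_nonneg (inner ℂ w (A v) : ℂ)]
  exact norm_eq_zero.mp this

lemma aux_self_real (hA : A.IsPositive) (x : H) :
    (((inner ℂ x (A x) : ℂ).re : ℂ)) = inner ℂ x (A x) :=
  Complex.conj_eq_iff_re.mp (aux_conj A hA x x)

lemma sip_self_one (hA : A.IsPositive) {x : H} (hx : semiNormA A x = 1) :
    (inner ℂ x (A x) : ℂ) = 1 := by
  unfold semiNormA sipA at hx
  have h1 : (inner ℂ x (A x) : ℂ).re = 1 := Real.sqrt_eq_one.mp hx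
  rw [← aux_self_real A hA x, h1, Complex.ofReal_one]

lemma exists_orth (hA : A.IsPositive)
    (hrank : 2 ≤ Module.rank ℂ (LinearMap.range A.toLinearMap))
    {x : H} (hx : (inner ℂ x (A x) : ℂ) = 1) :
    ∃ z : H, semiNormA A z = 1 ∧ (inner ℂ z (A x) : ℂ) = 0 := by
  by_cases h : ∃ v : H, (inner ℂ v (A x) : ℂ) = 0 ∧ (inner ℂ v (A v) : ℂ) ≠ 0
  · obtain ⟨v, hvx, hvv⟩ := h
    have hre : 0 < (inner ℂ v (A v) : ℂ).re := by
      rcases lt_or_eq_of_le (hA.re_inner_nonneg_right v) with h' | h'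
      · exact h'
      · exfalso; apply hvv
        have hre0 : (inner ℂ v (A v) : ℂ).re = 0 := by simpa using h'.symm
        rw [← aux_self_real A hA v, hre0]
        simp
    set r := Real.sqrt ((inner ℂ v (A v) : ℂ).re) with hr
    have hrpos : 0 < r := Real.sqrt_pos.mpr hre
    have hrne : ((r : ℂ)) ≠ 0 := by exact_mod_cast hrpos.ne'
    refine ⟨((r : ℂ))⁻¹ • v, ?_, ?_⟩
    · unfold semiNormA sipA
      have hzz : (inner ℂ (((r:ℂ))⁻¹ • v) (A (((r:ℂ))⁻¹ • v)) : ℂ) = 1 := by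
        rw [map_smul, inner_smul_left, inner_smul_right, ← aux_self_real A hA v]
        rw [map_inv₀, Complex.conj_ofReal]
        have : ((inner ℂ v (A v) : ℂ).re : ℂ) = ((r : ℂ)) ^ 2 := by
          rw [hr, ← Complex.ofReal_pow, Real.sq_sqrt hre.le]
        rw [this]
        field_simp
      rw [hzz]
      norm_num
    · rw [inner_smul_left, hvx, mul_zero]
  · push_neg at h
    exfalso
    have hAz : ∀ v : H, (inner ℂ v (A x) : ℂ) = 0 → A v = 0 := by
      intro v hv
      exact inner_self_eq_zero.mp (aux_cs_zero A hA (h v hv) (A v))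
    have hle : LinearMap.range A.toLinearMap ≤ Submodule.span ℂ {A x} := by
      rintro w hw
      obtain ⟨u, rfl⟩ := hw
      have hvx : (inner ℂ (u - conj (inner ℂ u (A x) : ℂ) • x) (A x) : ℂ) = 0 := by
        rw [inner_sub_left, inner_smul_left, hx]
        simp
      have h0 := hAz _ hvx
      rw [map_sub, map_smul, sub_eq_zero] at h0
      have : A.toLinearMap u = conj (inner ℂ u (A x) : ℂ) • A x := h0
      rw [this]
      exact Submodule.smul_mem _ _ (Submodule.mem_span_singleton_self _)
    have h1 : Module.rank ℂ (LinearMap.range A.toLinearMap) ≤ 1 := by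
      calc Module.rank ℂ (LinearMap.range A.toLinearMap)
          ≤ Module.rank ℂ (Submodule.span ℂ ({A x} : Set H)) := Submodule.rank_mono hle
        _ ≤ Cardinal.mk ({A x} : Set H) := rank_span_le _
        _ = 1 := Cardinal.mk_singleton _
    exact absurd (hrank.trans h1) (by norm_num)

end aux

theorem stmt_7 (A : H →L[ℂ] H) (hA : A.IsPositive)
    (hrank : 2 ≤ Module.rank ℂ (LinearMap.range A.toLinearMap))
    (T : H →L[ℂ] H) (hT : ABounded A T)
    (q : ℂ) (hq : ‖q‖ ≤ 1) :
    WqA A q T = {w : ℂ | ∃ x z : H, semiNormA A x = 1 ∧ semiNormA A z = 1 ∧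
      sipA A x z = 0 ∧
      w = q * sipA A (T x) x +
        (Real.sqrt (1 - ‖q‖ ^ 2) : ℂ) * sipA A (T x) z} := by
  have hq2 : (0:ℝ) ≤ 1 - ‖q‖ ^ 2 := by nlinarith [norm_nonneg q]
  set s : ℝ := Real.sqrt (1 - ‖q‖ ^ 2) with hs
  have hs2 : s ^ 2 = 1 - ‖q‖ ^ 2 := Real.sq_sqrt hq2
  have habs : q * (starRingEnd ℂ) q = ((‖q‖ : ℝ) : ℂ) ^ 2 := by
    rw [Complex.mul_conj, Complex.normSq_eq_norm_sq]; push_cast; ring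
  ext w
  simp only [WqA, Set.mem_setOf_eq]
  constructor
  · rintro ⟨x, y, hx, hy, hxy, rfl⟩
    have hx1 : (inner ℂ x (A x) : ℂ) = 1 := sip_self_one A hA hx
    have hy1 : (inner ℂ y (A y) : ℂ) = 1 := sip_self_one A hA hy
    have hxy' : (inner ℂ y (A x) : ℂ) = q := hxy
    have hxAy : (inner ℂ x (A y) : ℂ) = (starRingEnd ℂ) q := by
      rw [← aux_conj A hA x y, hxy']
    set u : H := y - (starRingEnd ℂ) q • x with hu
    have hux : (inner ℂ u (A x) : ℂ) = 0 := by
      rw [hu, inner_sub_left, inner_smul_left, hxy', hx1]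
      simp
    have huu : (inner ℂ u (A u) : ℂ) = ((1 - ‖q‖ ^ 2 : ℝ) : ℂ) := by
      rw [hu]
      simp only [map_sub, map_smul, inner_sub_left, inner_sub_right, inner_smul_left,
        inner_smul_right, hy1, hxy', hxAy, hx1, Complex.conj_conj]
      push_cast
      linear_combination -habs
    have hyu : y = (starRingEnd ℂ) q • x + u := by rw [hu]; abel
    by_cases hs0 : s = 0
    · have h1q : (1:ℝ) - ‖q‖ ^ 2 = 0 := by rw [← hs2, hs0]; ring
      have huu0 : (inner ℂ u (A u) : ℂ) = 0 := by rw [huu, h1q]; norm_num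
      have hTu : (inner ℂ u (A (T x)) : ℂ) = 0 := by
        rw [← aux_conj A hA u (T x), aux_cs_zero A hA huu0 (T x), map_zero]
      obtain ⟨z, hz1, hzx⟩ := exists_orth A hA hrank hx1
      refine ⟨x, z, hx, hz1, hzx, ?_⟩
      unfold sipA
      rw [hs0, hyu, inner_add_left, inner_smul_left, hTu, Complex.conj_conj]
      push_cast
      ring
    · have hsne : ((s : ℂ)) ≠ 0 := by exact_mod_cast hs0
      set z : H := ((s : ℂ))⁻¹ • u with hz
      have huz : u = ((s : ℂ)) • z := by rw [hz, smul_inv_smul₀ hsne]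
      have hzz : (inner ℂ z (A z) : ℂ) = 1 := by
        rw [hz, map_smul, inner_smul_left, inner_smul_right, huu, map_inv₀,
          Complex.conj_ofReal, ← hs2]
        push_cast
        field_simp
      have hz1 : semiNormA A z = 1 := by
        unfold semiNormA sipA
        rw [hzz]
        norm_num
      have hxz : (inner ℂ z (A x) : ℂ) = 0 := by
        rw [hz, inner_smul_left, hux, mul_zero]
      refine ⟨x, z, hx, hz1, hxz, ?_⟩
      unfold sipA
      rw [hyu, huz, inner_add_left, inner_smul_left, inner_smul_left, Complex.conj_conj,
        Complex.conj_ofReal]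
  · rintro ⟨x, z, hx, hz, hxz, rfl⟩
    have hx1 : (inner ℂ x (A x) : ℂ) = 1 := sip_self_one A hA hx
    have hz1 : (inner ℂ z (A z) : ℂ) = 1 := sip_self_one A hA hz
    have hzx : (inner ℂ z (A x) : ℂ) = 0 := hxz
    have hxAz : (inner ℂ x (A z) : ℂ) = 0 := by
      rw [← aux_conj A hA x z, hzx, map_zero]
    set y : H := (starRingEnd ℂ) q • x + ((s : ℂ)) • z with hy
    have hyx : (inner ℂ y (A x) : ℂ) = q := by
      rw [hy, inner_add_left, inner_smul_left, inner_smul_left, hx1, hzx, Complex.conj_conj]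
      simp
    have hyy : (inner ℂ y (A y) : ℂ) = 1 := by
      rw [hy]
      simp only [map_add, map_smul, inner_add_left, inner_add_right, inner_smul_left,
        inner_smul_right, hx1, hz1, hzx, hxAz, Complex.conj_conj, Complex.conj_ofReal]
      have hss : ((s:ℂ)) * ((s:ℂ)) = 1 - ((‖q‖ : ℝ) : ℂ) ^ 2 := by
        rw [show ((s:ℂ)) * ((s:ℂ)) = ((s ^ 2 : ℝ) : ℂ) by push_cast; ring, hs2]
        push_cast; ring
      linear_combination habs + hss
    have hy1 : semiNormA A y = 1 := by
      unfold semiNormA sipA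
      rw [hyy]
      norm_num
    refine ⟨x, y, hx, hy1, hyx, ?_⟩
    unfold sipA
    rw [hy, inner_add_left, inner_smul_left, inner_smul_left, Complex.conj_conj,
      Complex.conj_ofReal]
end
end

section
/- Let T be an A-bounded operator and q ∈ D, and suppose the range of A has dimension at least 2. Then |q|·w_A(T) ≤ w_{q,A}(T), where w_A(T) = sup{|⟨Tx,x⟩_A| : x ∈ H, ‖x‖_A = 1}. -/
set_option linter.unusedSectionVars false
noncomputable section

open Filter

variable {H : Type*} [NormedAddCommGroup H] [InnerProductSpace ℂ H] [CompleteSpace H]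

namespace SipAux

variable (A : H →L[ℂ] H)

lemma sip_add_left (x y z : H) : sipA A (x + y) z = sipA A x z + sipA A y z := by
  simp [sipA, inner_add_right]

lemma sip_smul_left (c : ℂ) (x z : H) : sipA A (c • x) z = c * sipA A x z := by
  simp [sipA, inner_smul_right]

lemma sip_smul_right (c : ℂ) (x z : H) : sipA A x (c • z) = starRingEnd ℂ c * sipA A x z := by
  simp [sipA, inner_smul_left, mul_comm]

lemma sip_add_right (x y z : H) : sipA A x (y + z) = sipA A x y + sipA A x z := by
  simp [sipA, inner_add_left]

variable {A} (hA : A.IsPositive)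
include hA

lemma sip_conj (x y : H) : sipA A x y = starRingEnd ℂ (sipA A y x) := by
  have h := hA.isSelfAdjoint.isSymmetric
  calc sipA A x y = inner ℂ y (A x) := rfl
    _ = starRingEnd ℂ (inner ℂ (A x) y) := by rw [inner_conj_symm]
    _ = starRingEnd ℂ (inner ℂ x (A y)) := by exact congrArg _ (h x y)
    _ = starRingEnd ℂ (sipA A y x) := rfl

/-- The `PreInnerProductSpace.Core` given by `A`. -/
def core : PreInnerProductSpace.Core ℂ H where
  inner x y := sipA A y x
  conj_inner_symm x y := show starRingEnd ℂ (sipA A x y) = sipA A y x from (sip_conj hA y x).symm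
  re_inner_nonneg x := by
    have := hA.inner_nonneg_right x
    simpa [sipA] using (Complex.nonneg_iff.mp this).1
  add_left x y z := by simp [sipA, inner_add_left]
  smul_left x y r := by simp [sipA, inner_smul_left, mul_comm]

lemma sip_self_re_nonneg (x : H) : 0 ≤ (sipA A x x).re := (core hA).re_inner_nonneg x

lemma semiNormA_nonneg (x : H) : 0 ≤ semiNormA A x := Real.sqrt_nonneg _

lemma semiNormA_sq (x : H) : semiNormA A x ^ 2 = (sipA A x x).re := by
  rw [semiNormA, Real.sq_sqrt (sip_self_re_nonneg hA x)]

lemma cauchy_schwarz (x y : H) :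
    ‖sipA A x y‖ ≤ semiNormA A x * semiNormA A y := by
  have h := @InnerProductSpace.Core.inner_mul_inner_self_le ℂ H _ _ _ (core hA) y x
  have hsymm : ‖(core hA).inner x y‖ = ‖(core hA).inner y x‖ := by
    rw [← (core hA).conj_inner_symm x y, RCLike.norm_conj]
  have hre : (RCLike.re ((core hA).inner y y) : ℝ) = (sipA A y y).re := rfl
  have hre' : (RCLike.re ((core hA).inner x x) : ℝ) = (sipA A x x).re := rfl
  -- h : ‖inner y x‖ * ‖inner x y‖ ≤ re (inner y y) * re (inner x x)
  have h2 : ‖sipA A x y‖ ^ 2 ≤ (semiNormA A x * semiNormA A y) ^ 2 := by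
    have : ‖(core hA).inner y x‖ = ‖sipA A x y‖ := rfl
    calc ‖sipA A x y‖ ^ 2 = ‖(core hA).inner y x‖ * ‖(core hA).inner x y‖ := by
          rw [hsymm, this]; ring
      _ ≤ RCLike.re ((core hA).inner y y) * RCLike.re ((core hA).inner x x) := h
      _ = (sipA A x x).re * (sipA A y y).re := by rw [hre, hre']; ring
      _ = (semiNormA A x * semiNormA A y) ^ 2 := by
          rw [mul_pow, semiNormA_sq hA, semiNormA_sq hA]
  have h3 := Real.sqrt_le_sqrt h2
  rw [Real.sqrt_sq (norm_nonneg _), Real.sqrt_sq (mul_nonneg (semiNormA_nonneg hA x)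
    (semiNormA_nonneg hA y))] at h3
  simpa using h3

lemma apply_eq_zero_of_semiNormA_eq_zero {x : H} (hx : semiNormA A x = 0) : A x = 0 := by
  have h : ∀ y : H, sipA A x y = 0 := by
    intro y
    have := cauchy_schwarz hA x y
    rw [hx, zero_mul] at this
    exact norm_eq_zero.mp (le_antisymm this (norm_nonneg _))
  have := h (A x)
  simpa [sipA, inner_self_eq_zero] using this

lemma semiNormA_smul (c : ℂ) (x : H) :
    semiNormA A (c • x) = ‖c‖ * semiNormA A x := by
  have h : (sipA A (c • x) (c • x)).re = ‖c‖ ^ 2 * (sipA A x x).re := by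
    rw [sip_smul_left, sip_smul_right]
    rw [← mul_assoc, mul_comm c, ← Complex.normSq_eq_conj_mul_self]
    simp [Complex.normSq_eq_norm_sq, ← Complex.ofReal_pow]
  rw [semiNormA, h, Real.sqrt_mul (by positivity), Real.sqrt_sq (norm_nonneg c)]
  rfl

lemma sip_self_eq_one {x : H} (hx : semiNormA A x = 1) : sipA A x x = 1 := by
  have him : (sipA A x x).im = 0 := by
    have h := sip_conj hA x x
    have := congrArg Complex.im h
    simp [Complex.conj_im] at this
    linarith
  have hre : (sipA A x x).re = 1 := by
    have h0 := sip_self_re_nonneg hA x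
    have : Real.sqrt (sipA A x x).re = 1 := hx
    nlinarith [Real.sq_sqrt h0, this]
  exact Complex.ext (by simp [hre]) (by simp [him])

lemma exists_unit (hrank : 2 ≤ Module.rank ℂ (LinearMap.range A.toLinearMap)) :
    ∃ x : H, semiNormA A x = 1 := by
  have hv : ∃ v : H, A v ≠ 0 := by
    by_contra hcon
    push_neg at hcon
    have : LinearMap.range A.toLinearMap = ⊥ := by
      rw [LinearMap.range_eq_bot]
      ext v; simpa using hcon v
    rw [this] at hrank
    simp at hrank
  obtain ⟨v, hv⟩ := hv
  have hnz : semiNormA A v ≠ 0 := fun h => hv (apply_eq_zero_of_semiNormA_eq_zero hA h)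
  refine ⟨((semiNormA A v : ℂ))⁻¹ • v, ?_⟩
  rw [semiNormA_smul hA]
  rw [norm_inv]
  simp only [Complex.norm_real, Real.norm_eq_abs, abs_of_nonneg (semiNormA_nonneg hA v)]
  field_simp

lemma exists_orth (hrank : 2 ≤ Module.rank ℂ (LinearMap.range A.toLinearMap))
    {x : H} (hx : semiNormA A x = 1) :
    ∃ z : H, semiNormA A z = 1 ∧ sipA A z x = 0 := by
  by_contra hcon
  push_neg at hcon
  have hxx := sip_self_eq_one hA hx
  have key : ∀ w : H, A w = sipA A w x • A x := by
    intro w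
    set u := w - sipA A w x • x with hu
    have hux : sipA A u x = 0 := by
      rw [hu, sub_eq_add_neg, sip_add_left, ← neg_one_smul ℂ (sipA A w x • x), smul_smul,
        sip_smul_left, hxx]
      ring
    have hun : semiNormA A u = 0 := by
      by_contra hun
      set z := ((semiNormA A u : ℂ))⁻¹ • u with hz
      have hz1 : semiNormA A z = 1 := by
        rw [hz, semiNormA_smul hA, norm_inv]
        simp only [Complex.norm_real, Real.norm_eq_abs, abs_of_nonneg (semiNormA_nonneg hA u)]
        field_simp
      have hz0 : sipA A z x = 0 := by rw [hz, sip_smul_left, hux, mul_zero]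
      exact hcon z hz1 hz0
    have := apply_eq_zero_of_semiNormA_eq_zero hA hun
    rw [hu] at this
    have h2 : A (w - sipA A w x • x) = A w - sipA A w x • A x := by
      rw [map_sub, map_smul]
    rw [h2, sub_eq_zero] at this
    exact this
  have hle : LinearMap.range A.toLinearMap ≤ Submodule.span ℂ {A x} := by
    rintro _ ⟨w, rfl⟩
    rw [ContinuousLinearMap.coe_coe, key w]
    exact Submodule.smul_mem _ _ (Submodule.mem_span_singleton_self _)
  have h1 : Module.rank ℂ (LinearMap.range A.toLinearMap)
      ≤ Module.rank ℂ (Submodule.span ℂ {A x}) := Submodule.rank_mono hle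
  have h2 : Module.rank ℂ (Submodule.span ℂ ({A x} : Set H)) ≤ 1 := by
    have := rank_span_le (R := ℂ) ({A x} : Set H)
    simpa using this
  have : (2 : Cardinal) ≤ 1 := le_trans hrank (le_trans h1 h2)
  norm_num at this

end SipAux

open SipAux in
theorem stmt_9 (A : H →L[ℂ] H) (hA : A.IsPositive)
    (hrank : 2 ≤ Module.rank ℂ (LinearMap.range A.toLinearMap))
    (T : H →L[ℂ] H) (hT : ABounded A T)
    (q : ℂ) (hq : ‖q‖ ≤ 1) :
    ‖q‖ *
        sSup {r : ℝ | ∃ x : H, semiNormA A x = 1 ∧ r = ‖sipA A (T x) x‖}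
      ≤ wqA A q T := by
  obtain ⟨c, hc, hTb⟩ := hT
  -- boundedness of the image set
  have hbdd : BddAbove ((fun z : ℂ => ‖z‖) '' WqA A q T) := by
    refine ⟨c, ?_⟩
    rintro _ ⟨z, ⟨x, y, hx, hy, -, rfl⟩, rfl⟩
    calc ‖sipA A (T x) y‖ ≤ semiNormA A (T x) * semiNormA A y :=
          cauchy_schwarz hA _ _
      _ = semiNormA A (T x) := by rw [hy, mul_one]
      _ ≤ c * semiNormA A x := hTb x
      _ = c := by rw [hx, mul_one]
  -- main pointwise estimate
  have key : ∀ x : H, semiNormA A x = 1 →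
      ‖q‖ * ‖sipA A (T x) x‖ ≤ wqA A q T := by
    intro x hx
    obtain ⟨z, hz1, hz0⟩ := exists_orth hA hrank hx
    have hxz : sipA A x z = 0 := by rw [sip_conj hA, hz0, map_zero]
    have hxx := sip_self_eq_one hA hx
    have hzz := sip_self_eq_one hA hz1
    set s : ℝ := Real.sqrt (1 - ‖q‖ ^ 2) with hs
    have hs2 : s ^ 2 = 1 - ‖q‖ ^ 2 := by
      rw [hs, Real.sq_sqrt]
      nlinarith [norm_nonneg q]
    have mem : ∀ ε : ℝ, ε = 1 ∨ ε = -1 →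
        q * sipA A (T x) x + (ε * s : ℝ) * sipA A (T x) z ∈ WqA A q T := by
      intro ε hε
      set y := (starRingEnd ℂ q) • x + ((ε * s : ℝ) : ℂ) • z with hy
      have hsipyy : sipA A y y = ((‖q‖ ^ 2 + (ε * s) ^ 2 : ℝ) : ℂ) := by
        simp only [hy, sip_add_left, sip_add_right, sip_smul_left, sip_smul_right, hxx, hzz,
          hxz, hz0, mul_zero, mul_one, add_zero, zero_add, Complex.conj_conj,
          Complex.conj_ofReal]
        rw [Complex.mul_conj]
        push_cast
        simp [Complex.normSq_eq_norm_sq]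
        ring
      have hes : (ε * s) ^ 2 = s ^ 2 := by rcases hε with h | h <;> rw [h] <;> ring
      have hyn : semiNormA A y = 1 := by
        rw [semiNormA, hsipyy]
        rw [Complex.ofReal_re]
        rw [hes, hs2]
        simp
      have hsipxy : sipA A x y = q := by
        rw [hy, sip_add_right, sip_smul_right, sip_smul_right, hxx, hxz, Complex.conj_conj]
        simp
      refine ⟨x, y, hx, hyn, hsipxy, ?_⟩
      rw [hy, sip_add_right, sip_smul_right, sip_smul_right, Complex.conj_conj,
        Complex.conj_ofReal]
    have h1 := mem 1 (Or.inl rfl)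
    have h2 := mem (-1) (Or.inr rfl)
    set z1 : ℂ := q * sipA A (T x) x + ((1 : ℝ) * s : ℝ) * sipA A (T x) z with hz1'
    set z2 : ℂ := q * sipA A (T x) x + ((-1 : ℝ) * s : ℝ) * sipA A (T x) z with hz2'
    have hw1 : ‖z1‖ ≤ wqA A q T := le_csSup hbdd ⟨z1, h1, rfl⟩
    have hw2 : ‖z2‖ ≤ wqA A q T := le_csSup hbdd ⟨z2, h2, rfl⟩
    have hsum : z1 + z2 = 2 * (q * sipA A (T x) x) := by
      rw [hz1', hz2']
      push_cast
      ring
    have : 2 * (‖q‖ * ‖sipA A (T x) x‖) ≤ 2 * wqA A q T := by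
      calc 2 * (‖q‖ * ‖sipA A (T x) x‖)
          = ‖z1 + z2‖ := by rw [hsum]; simp [map_mul]
        _ ≤ ‖z1‖ + ‖z2‖ := norm_add_le _ _
        _ ≤ 2 * wqA A q T := by linarith
    linarith
  -- nonnegativity of wqA
  have hw0 : 0 ≤ wqA A q T := by
    obtain ⟨x, hx⟩ := exists_unit hA hrank
    have := key x hx
    have habs : 0 ≤ ‖q‖ * ‖sipA A (T x) x‖ := by positivity
    linarith
  rcases eq_or_ne q 0 with rfl | hq0
  · simp only [norm_zero, zero_mul]
    exact hw0
  · have hqpos : 0 < ‖q‖ := by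
      simpa [norm_pos_iff] using hq0
    have hsup : sSup {r : ℝ | ∃ x : H, semiNormA A x = 1 ∧ r = ‖sipA A (T x) x‖}
        ≤ wqA A q T / ‖q‖ := by
      apply Real.sSup_le
      · rintro r ⟨x, hx, rfl⟩
        rw [le_div_iff₀ hqpos]
        rw [mul_comm]
        exact key x hx
      · exact div_nonneg hw0 hqpos.le
    calc ‖q‖ * sSup _ ≤ ‖q‖ * (wqA A q T / ‖q‖) := by
          exact mul_le_mul_of_nonneg_left hsup hqpos.le
      _ = wqA A q T := by field_simp
end
end

section
/- Let T be a bounded operator admitting an A-adjoint (there exists a bounded W with AW = T*A), let q ∈ D, and suppose the range of A has dimension at least 2. Then (|q|/2)·‖T‖_A ≤ w_{q,A}(T) ≤ ‖T‖_A, where ‖T‖_A = sup{‖Tx‖_A : x ∈ H, ‖x‖_A ≤ 1}. -/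
set_option maxHeartbeats 1000000
set_option synthInstance.maxHeartbeats 400000


noncomputable section

open Filter

variable {H : Type*} [NormedAddCommGroup H] [InnerProductSpace ℂ H] [CompleteSpace H]

/-- If `A S = S* A` and `⟪Rx,Ry⟫ = ⟪x,Ay⟫`, then `‖R (S x)‖ ≤ ‖S‖ ‖R x‖`. -/
lemma aux_selfadj_bound (A R S : H →L[ℂ] H)
    (hip : ∀ x y : H, (inner ℂ (R x) (R y) : ℂ) = inner ℂ x (A y))
    (hS : A * S = star S * A) (x : H) : ‖R (S x)‖ ≤ ‖S‖ * ‖R x‖ := by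
  have hcomm : ∀ k : ℕ, A * S ^ k = (star S) ^ k * A := by
    intro k
    induction k with
    | zero => simp
    | succ n ih =>
      rw [pow_succ, pow_succ, ← mul_assoc, ih, mul_assoc, hS, ← mul_assoc]
  have hf : ∀ k : ℕ, ‖R ((S ^ k) x)‖ ^ 2 ≤ ‖R x‖ * ‖R ((S ^ (2 * k)) x)‖ := by
    intro k
    have h1 : (inner ℂ (R ((S^k) x)) (R ((S^k) x)) : ℂ) = inner ℂ x (A ((S^(2*k)) x)) := by
      rw [hip]
      have : (inner ℂ ((S^k) x) (A ((S^k) x)) : ℂ)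
          = inner ℂ x ((ContinuousLinearMap.adjoint (S^k)) (A ((S^k) x))) := by
        rw [ContinuousLinearMap.adjoint_inner_right]
      rw [this, ← ContinuousLinearMap.star_eq_adjoint, star_pow]
      have h2 : ((star S) ^ k) (A ((S^k) x)) = A ((S ^ (2*k)) x) := by
        have : (star S) ^ k * (A * S ^ k) = A * S ^ (2 * k) := by
          rw [← mul_assoc, ← hcomm k, mul_assoc, ← pow_add, two_mul]
        calc ((star S) ^ k) (A ((S^k) x)) = ((star S) ^ k * (A * S ^ k)) x := rfl
          _ = (A * S ^ (2*k)) x := by rw [this]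
          _ = A ((S ^ (2*k)) x) := rfl
      rw [h2]
    have h3 : (‖R ((S^k) x)‖:ℝ) ^ 2 = ((inner ℂ (R ((S^k) x)) (R ((S^k) x)) : ℂ)).re := by
      rw [← inner_self_eq_norm_sq (𝕜 := ℂ)]; rfl
    rw [h3, h1, ← hip]
    calc ((inner ℂ (R x) (R ((S^(2*k)) x)) : ℂ)).re
        ≤ ‖(inner ℂ (R x) (R ((S^(2*k)) x)) : ℂ)‖ := Complex.re_le_norm _
      _ ≤ ‖R x‖ * ‖R ((S^(2*k)) x)‖ := norm_inner_le_norm _ _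
  have hpow : ∀ n : ℕ, ‖R (S x)‖ ^ (2^n) ≤ ‖R ((S ^ (2^n)) x)‖ * ‖R x‖ ^ (2^n - 1) := by
    intro n
    induction n with
    | zero => simp
    | succ n ih =>
      have h2n : (1:ℕ) ≤ 2^n := Nat.one_le_two_pow
      have e1 : (2:ℕ)^(n+1) = 2 * 2^n := by ring
      calc ‖R (S x)‖ ^ (2^(n+1)) = (‖R (S x)‖ ^ (2^n)) ^ 2 := by
            rw [pow_succ 2 n, pow_mul]
        _ ≤ (‖R ((S ^ (2^n)) x)‖ * ‖R x‖ ^ (2^n - 1)) ^ 2 := by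
            apply pow_le_pow_left₀ (by positivity) ih
        _ = ‖R ((S ^ (2^n)) x)‖ ^ 2 * ‖R x‖ ^ (2 * (2^n - 1)) := by
            rw [mul_pow, ← pow_mul, mul_comm (2^n - 1) 2]
        _ ≤ (‖R x‖ * ‖R ((S ^ (2 * 2^n)) x)‖) * ‖R x‖ ^ (2 * (2^n - 1)) := by
            apply mul_le_mul_of_nonneg_right (hf _) (by positivity)
        _ = ‖R ((S ^ (2^(n+1))) x)‖ * ‖R x‖ ^ (2^(n+1) - 1) := by
            rw [e1]
            have : (2:ℕ) * 2^n - 1 = 2 * (2^n - 1) + 1 := by omega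
            rw [this, pow_succ]; ring
  -- now conclude
  rcases eq_or_lt_of_le (norm_nonneg (R x)) with hx0 | hx0
  · -- ‖R x‖ = 0
    have h := hf 1
    simp only [pow_one] at h
    rw [← hx0, zero_mul] at h
    have : ‖R (S x)‖ = 0 := by nlinarith [norm_nonneg (R (S x))]
    rw [this]; positivity
  · rcases eq_or_lt_of_le (norm_nonneg S) with hS0 | hS0
    · have : S = 0 := by simpa using hS0.symm
      simp [this]
    by_contra hcon
    push_neg at hcon
    set a : ℝ := ‖R (S x)‖ / (‖S‖ * ‖R x‖) with ha
    have hden : 0 < ‖S‖ * ‖R x‖ := by positivity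
    have ha1 : 1 < a := (one_lt_div hden).mpr hcon
    set K : ℝ := ‖R‖ * ‖x‖ / ‖R x‖ with hK
    obtain ⟨n, hn⟩ := pow_unbounded_of_one_lt K ha1
    have hbig : a ^ n ≤ a ^ (2^n) :=
      pow_le_pow_right₀ ha1.le (Nat.lt_two_pow_self (n := n)).le
    have hkey : a ^ (2^n) ≤ K := by
      rw [ha, div_pow, hK, div_le_div_iff₀ (by positivity) hx0]
      calc ‖R (S x)‖ ^ 2^n * ‖R x‖
          ≤ (‖R ((S ^ (2^n)) x)‖ * ‖R x‖ ^ (2^n - 1)) * ‖R x‖ := by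
            apply mul_le_mul_of_nonneg_right (hpow n) (norm_nonneg _)
        _ = ‖R ((S ^ (2^n)) x)‖ * ‖R x‖ ^ (2^n) := by
            have : ‖R x‖ ^ (2^n - 1) * ‖R x‖ = ‖R x‖ ^ (2^n) := by
              rw [← pow_succ]; congr 1; have : (1:ℕ) ≤ 2^n := Nat.one_le_two_pow; omega
            rw [mul_assoc, this]
        _ ≤ (‖R‖ * (‖S‖ ^ (2^n) * ‖x‖)) * ‖R x‖ ^ (2^n) := by
            apply mul_le_mul_of_nonneg_right _ (by positivity)
            calc ‖R ((S ^ (2^n)) x)‖ ≤ ‖R‖ * ‖(S ^ (2^n)) x‖ := R.le_opNorm _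
              _ ≤ ‖R‖ * (‖S ^ (2^n)‖ * ‖x‖) := by
                  apply mul_le_mul_of_nonneg_left ((S ^ (2^n)).le_opNorm x) (norm_nonneg R)
              _ ≤ ‖R‖ * (‖S‖ ^ (2^n) * ‖x‖) := by
                  apply mul_le_mul_of_nonneg_left _ (norm_nonneg R)
                  exact mul_le_mul_of_nonneg_right (norm_pow_le' S (Nat.pos_of_ne_zero (by positivity))) (norm_nonneg x)
        _ = ‖R‖ * ‖x‖ * (‖S‖ * ‖R x‖) ^ 2^n := by rw [mul_pow]; ring
    exact absurd (hn.trans_le (hbig.trans hkey)) (lt_irrefl K)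

theorem stmt_10 (A : H →L[ℂ] H) (hA : A.IsPositive)
    (hrank : 2 ≤ Module.rank ℂ (LinearMap.range A.toLinearMap))
    (T : H →L[ℂ] H)
    (hadj : ∃ W : H →L[ℂ] H, A.comp W = (ContinuousLinearMap.adjoint T).comp A)
    (q : ℂ) (hq : ‖q‖ ≤ 1) :
    ‖q‖ / 2 * opNormA A T ≤ wqA A q T ∧ wqA A q T ≤ opNormA A T := by
  obtain ⟨W, hW⟩ := hadj
  -- square root of A
  have h0 : (0:H →L[ℂ] H) ≤ A := (ContinuousLinearMap.nonneg_iff_isPositive A).mpr hA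
  set R := CFC.sqrt A with hRdef
  have hRsq : R * R = A := CFC.sqrt_mul_sqrt_self A h0
  have hRsa : IsSelfAdjoint R := IsSelfAdjoint.of_nonneg (CFC.sqrt_nonneg A)
  have hRadj : ContinuousLinearMap.adjoint R = R := by
    rw [← ContinuousLinearMap.star_eq_adjoint]; exact hRsa
  have hip : ∀ x y : H, (inner ℂ (R x) (R y) : ℂ) = inner ℂ x (A y) := by
    intro x y
    calc (inner ℂ (R x) (R y) : ℂ) = inner ℂ x (ContinuousLinearMap.adjoint R (R y)) := by
          rw [ContinuousLinearMap.adjoint_inner_right]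
      _ = inner ℂ x ((R * R) y) := by rw [hRadj]; rfl
      _ = inner ℂ x (A y) := by rw [hRsq]
  have hsemi : ∀ x : H, semiNormA A x = ‖R x‖ := by
    intro x
    have : (sipA A x x).re = ‖R x‖ ^ 2 := by
      rw [sipA, ← hip, ← inner_self_eq_norm_sq (𝕜 := ℂ)]; rfl
    rw [semiNormA, this, Real.sqrt_sq (norm_nonneg _)]
  have hsip : ∀ x y : H, sipA A x y = (inner ℂ (R y) (R x) : ℂ) := by
    intro x y; rw [sipA, ← hip]
  -- star identities
  have hAsa : star A = A := hA.isSelfAdjoint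
  have hWmul : A * W = star T * A := by
    rw [ContinuousLinearMap.star_eq_adjoint]; exact hW
  have hWT : A * (W * T) = star (W * T) * A := by
    have h1 : star W * A = A * T := by
      calc star W * A = star W * star A := by rw [hAsa]
        _ = star (A * W) := by rw [star_mul]
        _ = star (star T * A) := by rw [hWmul]
        _ = star A * T := by rw [star_mul, star_star]
        _ = A * T := by rw [hAsa]
    calc A * (W * T) = (A * W) * T := by rw [mul_assoc]
      _ = star T * A * T := by rw [hWmul]
      _ = star T * (star W * A) := by rw [h1, mul_assoc]
      _ = (star T * star W) * A := by rw [mul_assoc]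
      _ = star (W * T) * A := by rw [star_mul]
  set c : ℝ := Real.sqrt ‖W * T‖ with hcdef
  have hc : 0 ≤ c := Real.sqrt_nonneg _
  -- A-boundedness of T
  have hbound : ∀ x : H, ‖R (T x)‖ ≤ c * ‖R x‖ := by
    intro x
    have h1 : ‖R (T x)‖ ^ 2 ≤ ‖W * T‖ * ‖R x‖ ^ 2 := by
      have e1 : (‖R (T x)‖:ℝ) ^ 2 = ((inner ℂ (R (T x)) (R (T x)) : ℂ)).re := by
        rw [← inner_self_eq_norm_sq (𝕜 := ℂ)]; rfl
      have e2 : (inner ℂ (R (T x)) (R (T x)) : ℂ) = inner ℂ (R x) (R ((W * T) x)) := by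
        rw [hip, hip]
        calc (inner ℂ (T x) (A (T x)) : ℂ)
            = inner ℂ x (ContinuousLinearMap.adjoint T (A (T x))) := by
              rw [ContinuousLinearMap.adjoint_inner_right]
          _ = inner ℂ x ((star T * A * T) x) := by rw [← ContinuousLinearMap.star_eq_adjoint]; rfl
          _ = inner ℂ x ((A * (W * T)) x) := by rw [← mul_assoc, ← hWmul, mul_assoc]
          _ = inner ℂ x (A ((W * T) x)) := rfl
      calc ‖R (T x)‖ ^ 2 = ((inner ℂ (R x) (R ((W * T) x)) : ℂ)).re := by rw [e1, e2]
        _ ≤ ‖(inner ℂ (R x) (R ((W * T) x)) : ℂ)‖ := Complex.re_le_norm _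
        _ ≤ ‖R x‖ * ‖R ((W * T) x)‖ := norm_inner_le_norm _ _
        _ ≤ ‖R x‖ * (‖W * T‖ * ‖R x‖) := by
            apply mul_le_mul_of_nonneg_left (aux_selfadj_bound A R (W*T) hip hWT x) (norm_nonneg _)
        _ = ‖W * T‖ * ‖R x‖ ^ 2 := by ring
    calc ‖R (T x)‖ = Real.sqrt (‖R (T x)‖ ^ 2) := (Real.sqrt_sq (norm_nonneg _)).symm
      _ ≤ Real.sqrt (‖W * T‖ * ‖R x‖ ^ 2) := Real.sqrt_le_sqrt h1
      _ = c * ‖R x‖ := by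
          rw [Real.sqrt_mul (norm_nonneg _), Real.sqrt_sq (norm_nonneg _)]
  -- the set defining opNormA
  set S2 : Set ℝ := (fun x => semiNormA A (T x)) '' {x : H | semiNormA A x ≤ 1} with hS2def
  have hmem0 : (0:ℝ) ∈ S2 := by
    refine ⟨0, by simp [hsemi], ?_⟩
    simp [hsemi]
  have hS2bdd : BddAbove S2 := by
    refine ⟨c, ?_⟩
    rintro m ⟨x, hx, rfl⟩
    simp only [Set.mem_setOf_eq, hsemi] at hx ⊢
    calc ‖R (T x)‖ ≤ c * ‖R x‖ := hbound x
      _ ≤ c * 1 := mul_le_mul_of_nonneg_left hx hc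
      _ = c := mul_one c
  have hop_nonneg : 0 ≤ opNormA A T := le_csSup hS2bdd hmem0
  -- upper bound for elements of the numerical range
  have hW1 : ∀ z ∈ WqA A q T, ‖z‖ ≤ opNormA A T := by
    rintro z ⟨x, y, hx, hy, hxy, rfl⟩
    rw [hsemi] at hx hy
    have h1 : ‖(sipA A (T x) y)‖ ≤ ‖R (T x)‖ := by
      rw [hsip]
      calc ‖(inner ℂ (R y) (R (T x)) : ℂ)‖ = ‖(inner ℂ (R y) (R (T x)) : ℂ)‖ := rfl
        _ ≤ ‖R y‖ * ‖R (T x)‖ := norm_inner_le_norm _ _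
        _ = ‖R (T x)‖ := by rw [hy, one_mul]
    refine h1.trans (le_csSup hS2bdd ⟨x, ?_, ?_⟩)
    · simp [Set.mem_setOf_eq, hsemi, hx]
    · simp only []; rw [hsemi]
  have upper : wqA A q T ≤ opNormA A T := by
    apply Real.sSup_le _ hop_nonneg
    rintro r ⟨z, hz, rfl⟩
    exact hW1 z hz
  have hwqbdd : BddAbove ((fun z : ℂ => ‖z‖) '' WqA A q T) := by
    refine ⟨opNormA A T, ?_⟩
    rintro r ⟨z, hz, rfl⟩
    exact hW1 z hz
  have hwq_nonneg : 0 ≤ wqA A q T := by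
    apply Real.sSup_nonneg
    rintro r ⟨z, _, rfl⟩
    exact norm_nonneg z
  -- existence of an A-orthogonal unit vector
  have hv : ∀ u : H, ‖R u‖ = 1 → ∃ v : H, ‖R v‖ = 1 ∧ (inner ℂ (R u) (R v) : ℂ) = 0 := by
    intro u hu
    have hle : LinearMap.range A.toLinearMap ≤ LinearMap.range R.toLinearMap := by
      rintro z ⟨w, rfl⟩
      exact ⟨R w, by rw [← hRsq]; rfl⟩
    have hrankR : 2 ≤ Module.rank ℂ (LinearMap.range R.toLinearMap) :=
      le_trans hrank (Submodule.rank_mono hle)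
    have hex : ∃ w : H, R w ∉ (ℂ ∙ (R u)) := by
      by_contra hcon
      push_neg at hcon
      have hsub : LinearMap.range R.toLinearMap ≤ (ℂ ∙ (R u)) := by
        rintro z ⟨w, rfl⟩; exact hcon w
      have h1 : Module.rank ℂ (LinearMap.range R.toLinearMap) ≤ Module.rank ℂ (ℂ ∙ (R u)) :=
        Submodule.rank_mono hsub
      have h2 : Module.rank ℂ (ℂ ∙ (R u)) ≤ 1 := by
        simpa using rank_span_le (R := ℂ) ({R u} : Set H)
      have := le_trans hrankR (le_trans h1 h2)
      norm_num at this
    obtain ⟨w, hw⟩ := hex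
    set v0 : H := w - (inner ℂ (R u) (R w) : ℂ) • u with hv0def
    have hRv0 : R v0 = R w - (inner ℂ (R u) (R w) : ℂ) • R u := by
      rw [hv0def, map_sub, map_smul]
    have horth0 : (inner ℂ (R u) (R v0) : ℂ) = 0 := by
      rw [hRv0, inner_sub_right, inner_smul_right]
      rw [inner_self_eq_norm_sq_to_K, hu]
      simp
    have hv0ne : R v0 ≠ 0 := by
      intro hzero
      apply hw
      rw [hRv0, sub_eq_zero] at hzero
      exact Submodule.mem_span_singleton.mpr ⟨_, hzero.symm⟩
    have hnv0 : (0:ℝ) < ‖R v0‖ := norm_pos_iff.mpr hv0ne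
    refine ⟨((‖R v0‖:ℝ)⁻¹ : ℂ) • v0, ?_, ?_⟩
    · rw [map_smul, norm_smul]
      simp [norm_inv, abs_of_pos hnv0, inv_mul_cancel₀ hnv0.ne']
    · rw [map_smul, inner_smul_right, horth0, mul_zero]
  -- Step B, unit vector case
  have stepBunit : ∀ u : H, ‖R u‖ = 1 →
      ‖q‖ * ‖(inner ℂ (R u) (R (T u)) : ℂ)‖ ≤ wqA A q T := by
    intro u hu
    obtain ⟨v, hv1, hv2⟩ := hv u hu
    set s : ℝ := Real.sqrt (1 - (‖q‖)^2) with hsdef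
    have hq2 : (‖q‖)^2 ≤ 1 := by nlinarith [norm_nonneg q]
    have hs2 : s^2 = 1 - (‖q‖)^2 := Real.sq_sqrt (by linarith)
    set b : ℂ := inner ℂ (R u) (R (T u)) with hbdef
    set d : ℂ := inner ℂ (R v) (R (T u)) with hddef
    have key : ∀ ε : ℝ, ε^2 = 1 → ‖(q * b + ((ε*s : ℝ) : ℂ) * d)‖ ≤ wqA A q T := by
      intro ε hε
      set y : H := (starRingEnd ℂ q) • u + ((ε*s : ℝ) : ℂ) • v with hydef
      have hRy : R y = (starRingEnd ℂ q) • R u + ((ε*s : ℝ) : ℂ) • R v := by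
        rw [hydef, map_add, map_smul, map_smul]
      have horth : (inner ℂ ((starRingEnd ℂ q) • R u) (((ε*s : ℝ) : ℂ) • R v) : ℂ) = 0 := by
        rw [inner_smul_left, inner_smul_right, hv2]; ring
      have hny : ‖R y‖ = 1 := by
        have h2 : ‖R y‖^2 = 1 := by
          rw [hRy, @norm_add_sq ℂ _ _ _ _ _ _, horth]
          simp only [map_zero, mul_zero, add_zero]
          rw [norm_smul, norm_smul, RCLike.norm_conj, Complex.norm_real, hv1, hu]
          have hnq : ‖q‖ = ‖q‖ := rfl
          rw [hnq, Real.norm_eq_abs, mul_pow, mul_pow, sq_abs, mul_pow, hε, hs2]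
          ring
        rw [← Real.sqrt_sq (norm_nonneg _), h2, Real.sqrt_one]
      have hsy : sipA A u y = q := by
        rw [hsip, hRy, inner_add_left, inner_smul_left, inner_smul_left]
        rw [inner_self_eq_norm_sq_to_K, hu]
        have h1 : (inner ℂ (R v) (R u) : ℂ) = 0 := by
          rw [← inner_conj_symm, hv2, map_zero]
        rw [h1]
        simp
      have hz : sipA A (T u) y = q * b + ((ε*s : ℝ) : ℂ) * d := by
        rw [hsip, hRy, inner_add_left, inner_smul_left, inner_smul_left, ← hbdef, ← hddef,
          Complex.conj_conj, Complex.conj_ofReal]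
      have hmem : (q * b + ((ε*s : ℝ) : ℂ) * d) ∈ WqA A q T := by
        refine ⟨u, y, ?_, ?_, hsy, hz.symm⟩
        · rw [hsemi]; exact hu
        · rw [hsemi]; exact hny
      exact le_csSup hwqbdd ⟨_, hmem, rfl⟩
    have k1 := key 1 (by norm_num)
    have k2 := key (-1) (by norm_num)
    have hsum : ‖(2 * (q * b))‖ ≤ 2 * wqA A q T := by
      have e : (2 : ℂ) * (q * b) = (q * b + ((1*s : ℝ) : ℂ) * d) + (q * b + (((-1)*s : ℝ) : ℂ) * d) := by
        push_cast; ring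
      rw [e]
      calc ‖_‖ ≤ ‖(q * b + ((1*s : ℝ) : ℂ) * d)‖
            + ‖(q * b + (((-1)*s : ℝ) : ℂ) * d)‖ := norm_add_le _ _
        _ ≤ 2 * wqA A q T := by linarith
    rw [norm_mul, norm_mul] at hsum
    simp only [Complex.norm_two] at hsum
    linarith
  -- Step B, general case
  have stepB : ∀ u : H, ‖q‖ * ‖(inner ℂ (R u) (R (T u)) : ℂ)‖
      ≤ wqA A q T * ‖R u‖^2 := by
    intro u
    rcases eq_or_lt_of_le (norm_nonneg (R u)) with h0u | h0u
    · have : R u = 0 := norm_eq_zero.mp h0u.symm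
      rw [this, inner_zero_left]
      simp only [norm_zero, mul_zero]
      positivity
    · set r : ℝ := ‖R u‖ with hrdef
      set u' : H := ((r⁻¹ : ℝ) : ℂ) • u with hu'def
      have hru' : ‖R u'‖ = 1 := by
        rw [hu'def, map_smul, norm_smul, Complex.norm_real, Real.norm_eq_abs,
          abs_of_pos (inv_pos.mpr h0u), ← hrdef, inv_mul_cancel₀ h0u.ne']
      have hinner' : (inner ℂ (R u') (R (T u')) : ℂ)
          = ((r⁻¹ : ℝ) : ℂ) * ((r⁻¹ : ℝ) : ℂ) * inner ℂ (R u) (R (T u)) := by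
        rw [hu'def, map_smul, map_smul, map_smul, inner_smul_left, inner_smul_right,
          Complex.conj_ofReal]
        ring
      have := stepBunit u' hru'
      rw [hinner'] at this
      rw [norm_mul, norm_mul, Complex.norm_real, Real.norm_eq_abs, abs_of_pos (inv_pos.mpr h0u)] at this
      have h3 := mul_le_mul_of_nonneg_left this (mul_pos h0u h0u).le
      have e : r * r * (‖q‖ * (r⁻¹ * r⁻¹ * ‖(inner ℂ (R u) (R (T u)) : ℂ)‖))
          = ‖q‖ * ‖(inner ℂ (R u) (R (T u)) : ℂ)‖ := by
        field_simp
      rw [e] at h3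
      calc ‖q‖ * ‖(inner ℂ (R u) (R (T u)) : ℂ)‖
          ≤ r * r * wqA A q T := h3
        _ = wqA A q T * ‖R u‖^2 := by rw [hrdef]; ring
  -- Step A : for unit vectors, |q| ‖R (T x)‖ ≤ 2 wqA
  set B : H → H → ℂ := fun u v => inner ℂ (R v) (R (T u)) with hBdef
  have expand : ∀ (x y : H) (cc : ℂ), B (x + cc • y) (x + cc • y)
      = B x x + (starRingEnd ℂ cc) * B x y + cc * B y x + cc * (starRingEnd ℂ cc) * B y y := by
    intro x y cc
    simp only [hBdef, map_add, map_smul, inner_add_left, inner_add_right,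
      inner_smul_left, inner_smul_right]
    ring
  have stepAunit : ∀ x : H, ‖R x‖ = 1 → ‖q‖ * ‖R (T x)‖ ≤ 2 * wqA A q T := by
    intro x hx
    rcases eq_or_lt_of_le (norm_nonneg (R (T x))) with ht0 | ht0
    · rw [← ht0, mul_zero]
      positivity
    · set t : ℝ := ‖R (T x)‖ with htdef
      set y : H := ((t⁻¹ : ℝ) : ℂ) • (T x) with hydef
      have hy1 : ‖R y‖ = 1 := by
        rw [hydef, map_smul, norm_smul, Complex.norm_real, Real.norm_eq_abs,
          abs_of_pos (inv_pos.mpr ht0), ← htdef, inv_mul_cancel₀ ht0.ne']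
      have hb : B x y = (t : ℂ) := by
        rw [hBdef]
        simp only [hydef, map_smul, inner_smul_left, Complex.conj_ofReal]
        rw [inner_self_eq_norm_sq_to_K, ← htdef]
        have htne : (t:ℂ) ≠ 0 := by exact_mod_cast ht0.ne'
        push_cast
        field_simp
        ring
        rfl
      have hpol : (4:ℂ) * B x y
          = (B (x + (1:ℂ) • y) (x + (1:ℂ) • y) - B (x + (-1:ℂ) • y) (x + (-1:ℂ) • y))
            + Complex.I * (B (x + Complex.I • y) (x + Complex.I • y)
              - B (x + (-Complex.I) • y) (x + (-Complex.I) • y)) := by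
        rw [expand x y 1, expand x y (-1), expand x y Complex.I, expand x y (-Complex.I)]
        simp only [map_one, map_neg, Complex.conj_I]
        linear_combination (2 * B x y - 2 * B y x) * Complex.I_mul_I
      -- bound each diagonal term
      have hRterm : ∀ cc : ℂ, R (x + cc • y) = R x + cc • R y := by
        intro cc; rw [map_add, map_smul]
      have hnorms : ‖R (x + (1:ℂ) • y)‖^2 + ‖R (x + (-1:ℂ) • y)‖^2
          + ‖R (x + Complex.I • y)‖^2 + ‖R (x + (-Complex.I) • y)‖^2 = 8 := by
        rw [hRterm, hRterm, hRterm, hRterm]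
        have p1 := parallelogram_law_with_norm ℂ (R x) (R y)
        have p2 := parallelogram_law_with_norm ℂ (R x) (Complex.I • R y)
        have e1 : R x + (1:ℂ) • R y = R x + R y := by rw [one_smul]
        have e2 : R x + (-1:ℂ) • R y = R x - R y := by
          rw [neg_smul, one_smul, sub_eq_add_neg]
        have e3 : R x + (-Complex.I) • R y = R x - Complex.I • R y := by
          rw [neg_smul, sub_eq_add_neg]
        have e4 : ‖Complex.I • R y‖ = ‖R y‖ := by
          rw [norm_smul, Complex.norm_I, one_mul]
        rw [e1, e2, e3]
        simp only [pow_two]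
        rw [hx, hy1] at p1
        rw [e4, hx, hy1] at p2
        linarith
      have habs : ‖q‖ * (4 * t) ≤ wqA A q T * 8 := by
        have h4 : ‖((4:ℂ) * B x y)‖ = 4 * t := by
          rw [hb, norm_mul]
          simp [Complex.norm_real, abs_of_pos ht0]
        have htri : ‖((4:ℂ) * B x y)‖
            ≤ ‖(B (x + (1:ℂ) • y) (x + (1:ℂ) • y))‖
              + ‖(B (x + (-1:ℂ) • y) (x + (-1:ℂ) • y))‖
              + ‖(B (x + Complex.I • y) (x + Complex.I • y))‖
              + ‖(B (x + (-Complex.I) • y) (x + (-Complex.I) • y))‖ := by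
          rw [hpol]
          calc ‖_‖ ≤ ‖(B (x + (1:ℂ) • y) (x + (1:ℂ) • y)
                - B (x + (-1:ℂ) • y) (x + (-1:ℂ) • y))‖
                + ‖(Complex.I * (B (x + Complex.I • y) (x + Complex.I • y)
                  - B (x + (-Complex.I) • y) (x + (-Complex.I) • y)))‖ := norm_add_le _ _
            _ ≤ _ := by
                rw [norm_mul, Complex.norm_I, one_mul]
                have t1 := norm_sub_le (B (x + (1:ℂ) • y) (x + (1:ℂ) • y))
                  (B (x + (-1:ℂ) • y) (x + (-1:ℂ) • y))
                have t2 := norm_sub_le (B (x + Complex.I • y) (x + Complex.I • y))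
                  (B (x + (-Complex.I) • y) (x + (-Complex.I) • y))
                linarith
        have hB : ∀ u : H, ‖q‖ * ‖(B u u)‖ ≤ wqA A q T * ‖R u‖^2 :=
          fun u => stepB u
        have s0 := hB (x + (1:ℂ) • y)
        have s1 := hB (x + (-1:ℂ) • y)
        have s2 := hB (x + Complex.I • y)
        have s3 := hB (x + (-Complex.I) • y)
        have hqa : 0 ≤ ‖q‖ := norm_nonneg q
        calc ‖q‖ * (4 * t) = ‖q‖ * ‖((4:ℂ) * B x y)‖ := by rw [h4]
          _ ≤ ‖q‖ * (‖(B (x + (1:ℂ) • y) (x + (1:ℂ) • y))‖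
              + ‖(B (x + (-1:ℂ) • y) (x + (-1:ℂ) • y))‖
              + ‖(B (x + Complex.I • y) (x + Complex.I • y))‖
              + ‖(B (x + (-Complex.I) • y) (x + (-Complex.I) • y))‖) :=
              mul_le_mul_of_nonneg_left htri hqa
          _ ≤ wqA A q T * ‖R (x + (1:ℂ) • y)‖^2 + wqA A q T * ‖R (x + (-1:ℂ) • y)‖^2
              + wqA A q T * ‖R (x + Complex.I • y)‖^2
              + wqA A q T * ‖R (x + (-Complex.I) • y)‖^2 := by
              nlinarith [s0, s1, s2, s3]
          _ = wqA A q T * (‖R (x + (1:ℂ) • y)‖^2 + ‖R (x + (-1:ℂ) • y)‖^2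
              + ‖R (x + Complex.I • y)‖^2 + ‖R (x + (-Complex.I) • y)‖^2) := by ring
          _ = wqA A q T * 8 := by rw [hnorms]
      linarith
  -- Step A general: ‖R x‖ ≤ 1
  have stepA : ∀ x : H, ‖R x‖ ≤ 1 → ‖q‖ * ‖R (T x)‖ ≤ 2 * wqA A q T := by
    intro x hx
    rcases eq_or_lt_of_le (norm_nonneg (R x)) with h0x | h0x
    · have h1 : ‖R (T x)‖ ≤ 0 := by
        calc ‖R (T x)‖ ≤ c * ‖R x‖ := hbound x
          _ = 0 := by rw [← h0x, mul_zero]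
      have h2 : ‖R (T x)‖ = 0 := le_antisymm h1 (norm_nonneg _)
      rw [h2, mul_zero]
      positivity
    · set r : ℝ := ‖R x‖ with hrdef
      set x' : H := ((r⁻¹ : ℝ) : ℂ) • x with hx'def
      have hrx' : ‖R x'‖ = 1 := by
        rw [hx'def, map_smul, norm_smul, Complex.norm_real, Real.norm_eq_abs,
          abs_of_pos (inv_pos.mpr h0x), ← hrdef, inv_mul_cancel₀ h0x.ne']
      have hTx' : ‖R (T x')‖ = r⁻¹ * ‖R (T x)‖ := by
        rw [hx'def, map_smul, map_smul, norm_smul, Complex.norm_real, Real.norm_eq_abs,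
          abs_of_pos (inv_pos.mpr h0x)]
      have h1 := stepAunit x' hrx'
      rw [hTx'] at h1
      have h2 := mul_le_mul_of_nonneg_left h1 h0x.le
      have e : r * (‖q‖ * (r⁻¹ * ‖R (T x)‖)) = ‖q‖ * ‖R (T x)‖ := by
        field_simp
      rw [e] at h2
      calc ‖q‖ * ‖R (T x)‖ ≤ r * (2 * wqA A q T) := h2
        _ ≤ 1 * (2 * wqA A q T) := by
            apply mul_le_mul_of_nonneg_right _ (by linarith)
            rw [hrdef]; exact hx
        _ = 2 * wqA A q T := one_mul _
  -- conclusion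
  refine ⟨?_, upper⟩
  rcases eq_or_ne q 0 with rfl | hq0
  · simp only [norm_zero, zero_div, zero_mul]
    exact hwq_nonneg
  · have habsq : 0 < ‖q‖ := norm_pos_iff.mpr hq0
    have hsup : opNormA A T ≤ 2 * wqA A q T / ‖q‖ := by
      apply Real.sSup_le _ (by positivity)
      rintro m ⟨x, hx, rfl⟩
      simp only [Set.mem_setOf_eq, hsemi] at hx
      simp only []
      rw [hsemi, le_div_iff₀ habsq]
      have := stepA x hx
      linarith
    calc ‖q‖ / 2 * opNormA A T
        ≤ ‖q‖ / 2 * (2 * wqA A q T / ‖q‖) := by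
          apply mul_le_mul_of_nonneg_left hsup (by positivity)
      _ = wqA A q T := by field_simp
end
end

section
/- Let T be a bounded operator admitting an A-adjoint (there exists a bounded W with AW = T*A), let q ∈ D with q ≠ 0, suppose the range of A has dimension at least 2, and let r ≥ 0. If the sequence (‖Tⁿ‖_A)^{1/n} converges to r as n → ∞ (where ‖S‖_A = sup{‖Sx‖_A : x ∈ H, ‖x‖_A ≤ 1}), then the sequence (w_{q,A}(Tⁿ))^{1/n} also converges to r as n → ∞. -/
noncomputable section

open Filter

variable {H : Type*} [NormedAddCommGroup H] [InnerProductSpace ℂ H] [CompleteSpace H]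

set_option linter.unusedSectionVars false

open ContinuousLinearMap

section Aux

variable {A R : H →L[ℂ] H} (hR : R.IsPositive) (hRA : ∀ x, A x = R (R x))

include hR hRA

include hR hRA

lemma inner_R (x y : H) : (inner ℂ y (A x) : ℂ) = inner ℂ (R y) (R x) := by
  rw [hRA x]
  nth_rewrite 1 [← hR.isSelfAdjoint.adjoint_eq]
  rw [adjoint_inner_right]

/-- key step: if `A B = C* A` then `‖R(Bx)‖² ≤ ‖R(C(Bx))‖ ‖Rx‖`. -/
lemma step_ineq {B C : H →L[ℂ] H} (hBC : A.comp B = (adjoint C).comp A) (x : H) :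
    ‖R (B x)‖ ^ 2 ≤ ‖R (C (B x))‖ * ‖R x‖ := by
  have h1 : (‖R (B x)‖ : ℝ) ^ 2 = (inner ℂ (R (B x)) (R (B x)) : ℂ).re := by
    rw [← RCLike.re_to_complex, inner_self_eq_norm_sq]
  have h2 : (inner ℂ (B x) (A (B x)) : ℂ) = inner ℂ (R (C (B x))) (R x) := by
    have hc : A (B x) = (adjoint C) (A x) := by
      have := congrFun (congrArg DFunLike.coe hBC) x
      simpa using this
    rw [hc, adjoint_inner_right, inner_R hR hRA]
  calc ‖R (B x)‖ ^ 2 = (inner ℂ (R (C (B x))) (R x) : ℂ).re := by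
        rw [h1, ← inner_R hR hRA, h2]
    _ ≤ ‖(inner ℂ (R (C (B x))) (R x) : ℂ)‖ := by simpa using Complex.re_le_norm (inner ℂ (R (C (B x))) (R x))
    _ ≤ ‖R (C (B x))‖ * ‖R x‖ := norm_inner_le_norm _ _

omit hR hRA in
lemma pow_squeeze {a b c : ℝ} (ha : 0 ≤ a) (hb : 0 ≤ b)
    (h : ∀ k : ℕ, a ^ (2 ^ k) ≤ c * b ^ (2 ^ k)) : a ≤ b := by
  by_contra hab
  push_neg at hab
  rcases eq_or_lt_of_le hb with hb0 | hb0
  · have h0 := h 0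
    simp [← hb0] at h0
    exact absurd (le_antisymm h0 ha) (by rw [← hb0] at hab; exact ne_of_gt hab)
  · have hr : 1 < a / b := (one_lt_div hb0).2 hab
    have hbound : ∀ k : ℕ, (a / b) ^ k ≤ c := by
      intro k
      have h1 : (a / b) ^ (2 ^ k) ≤ c := by
        rw [div_pow, div_le_iff₀ (by positivity)]
        exact h k
      calc (a / b) ^ k ≤ (a / b) ^ (2 ^ k) :=
            pow_le_pow_right₀ (le_of_lt hr) (Nat.le_of_lt (Nat.lt_two_pow_self (n := k)))
        _ ≤ c := h1
    obtain ⟨k, hk⟩ := pow_unbounded_of_one_lt c hr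
    exact absurd (hbound k) (not_le.2 hk)

omit hR hRA in
lemma selfadj_pow_comp {D : H →L[ℂ] H} (hD : A.comp D = (adjoint D).comp A) (m : ℕ) :
    A.comp (D ^ m) = (adjoint (D ^ m)).comp A := by
  have key : A * D ^ m = (adjoint D) ^ m * A := by
    induction m with
    | zero => simp
    | succ k ih =>
      have hD' : A * D = adjoint D * A := hD
      rw [pow_succ, pow_succ, ← mul_assoc, ih, mul_assoc, hD', ← mul_assoc]
  have : adjoint (D ^ m) = (adjoint D) ^ m := by
    rw [← star_eq_adjoint, ← star_eq_adjoint, star_pow]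
  rw [this]
  exact key

/-- iteration: for A-selfadjoint D, `‖R(Dx)‖^(2^k) ≤ ‖R(D^(2^k) x)‖ * ‖Rx‖^(2^k - 1)`. -/
lemma iter_ineq {D : H →L[ℂ] H} (hD : A.comp D = (adjoint D).comp A) (x : H) (k : ℕ) :
    ‖R (D x)‖ ^ (2 ^ k) ≤ ‖R ((D ^ (2 ^ k)) x)‖ * ‖R x‖ ^ (2 ^ k - 1) := by
  induction k with
  | zero => simp
  | succ k ih =>
    have hstep : ‖R ((D ^ (2 ^ k)) x)‖ ^ 2 ≤ ‖R ((D ^ (2 ^ (k+1))) x)‖ * ‖R x‖ := by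
      have h := step_ineq hR hRA (selfadj_pow_comp hD (2 ^ k)) x
      have he : (D ^ (2 ^ k)) ((D ^ (2 ^ k)) x) = (D ^ (2 ^ (k+1))) x := by
        rw [← ContinuousLinearMap.mul_apply, ← pow_add]
        congr 1
        ring
      rwa [he] at h
    calc ‖R (D x)‖ ^ (2 ^ (k+1)) = (‖R (D x)‖ ^ (2 ^ k)) ^ 2 := by
          rw [← pow_mul, pow_succ]
      _ ≤ (‖R ((D ^ (2 ^ k)) x)‖ * ‖R x‖ ^ (2 ^ k - 1)) ^ 2 := by
          exact pow_le_pow_left₀ (by positivity) ih 2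
      _ = ‖R ((D ^ (2 ^ k)) x)‖ ^ 2 * (‖R x‖ ^ (2 ^ k - 1)) ^ 2 := by ring
      _ ≤ (‖R ((D ^ (2 ^ (k+1))) x)‖ * ‖R x‖) * (‖R x‖ ^ (2 ^ k - 1)) ^ 2 := by
          exact mul_le_mul_of_nonneg_right hstep (by positivity)
      _ = ‖R ((D ^ (2 ^ (k+1))) x)‖ * ‖R x‖ ^ (2 ^ (k+1) - 1) := by
          rw [← pow_mul, mul_assoc, ← pow_succ']
          congr 2
          have h1 : 1 ≤ 2 ^ k := Nat.one_le_two_pow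
          have h2 : 2 ^ (k+1) = 2 ^ k * 2 := by rw [pow_succ]
          omega

/-- A-selfadjoint operators are A-bounded with constant ‖D‖. -/
lemma selfadj_bound {D : H →L[ℂ] H} (hD : A.comp D = (adjoint D).comp A) (x : H) :
    ‖R (D x)‖ ≤ ‖D‖ * ‖R x‖ := by
  rcases eq_or_lt_of_le (norm_nonneg (R x)) with h0 | h0
  · have h := step_ineq hR hRA hD x
    rw [← h0, mul_zero] at h
    have hz : ‖R (D x)‖ = 0 := by nlinarith [norm_nonneg (R (D x))]
    rw [hz, ← h0, mul_zero]
  · refine pow_squeeze (c := ‖R‖ * ‖x‖ / ‖R x‖) (norm_nonneg _) (by positivity) (fun k => ?_)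
    have h1 := iter_ineq hR hRA hD x k
    have h2 : ‖R ((D ^ (2 ^ k)) x)‖ ≤ ‖R‖ * (‖D‖ ^ (2 ^ k) * ‖x‖) := by
      calc ‖R ((D ^ (2 ^ k)) x)‖ ≤ ‖R‖ * ‖(D ^ (2 ^ k)) x‖ := le_opNorm _ _
        _ ≤ ‖R‖ * (‖D ^ (2 ^ k)‖ * ‖x‖) :=
            mul_le_mul_of_nonneg_left (le_opNorm _ _) (norm_nonneg _)
        _ ≤ ‖R‖ * (‖D‖ ^ (2 ^ k) * ‖x‖) := by
            have := norm_pow_le' D (n := 2 ^ k) (by positivity)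
            have hx0 : (0:ℝ) ≤ ‖x‖ := norm_nonneg _
            have hR0 : (0:ℝ) ≤ ‖R‖ := norm_nonneg _
            exact mul_le_mul_of_nonneg_left (mul_le_mul_of_nonneg_right this hx0) hR0
    have heq : ‖R‖ * ‖x‖ / ‖R x‖ * (‖D‖ * ‖R x‖) ^ (2 ^ k)
        = (‖R‖ * (‖D‖ ^ (2 ^ k) * ‖x‖)) * ‖R x‖ ^ (2 ^ k - 1) := by
      rw [mul_pow]
      rw [show (2:ℕ) ^ k = (2 ^ k - 1) + 1 from by
        have : 1 ≤ 2 ^ k := Nat.one_le_two_pow; omega]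
      rw [pow_succ]
      field_simp
      rw [Nat.add_sub_cancel]
      ring
    rw [heq]
    calc ‖R (D x)‖ ^ (2 ^ k) ≤ ‖R ((D ^ (2 ^ k)) x)‖ * ‖R x‖ ^ (2 ^ k - 1) := h1
      _ ≤ (‖R‖ * (‖D‖ ^ (2 ^ k) * ‖x‖)) * ‖R x‖ ^ (2 ^ k - 1) :=
          mul_le_mul_of_nonneg_right h2 (by positivity)


omit hR hRA in
/-- phase alignment -/
lemma phase_lemma (a b : ℂ) :
    ∃ ω : ℂ, ‖ω‖ = 1 ∧ ‖a + ω * b‖ = ‖a‖ + ‖b‖ := by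
  rcases eq_or_ne b 0 with rfl | hb
  · exact ⟨1, by simp⟩
  rcases eq_or_ne a 0 with rfl | ha
  · refine ⟨(‖b‖ : ℂ) / b, ?_, ?_⟩
    · rw [norm_div, Complex.norm_real, Real.norm_eq_abs, abs_of_nonneg (norm_nonneg b),
        div_self (norm_ne_zero_iff.mpr hb)]
    · rw [zero_add, div_mul_cancel₀ _ hb]
      simp [Complex.norm_real, Real.norm_eq_abs, abs_of_nonneg (norm_nonneg b)]
  · have ha' : ‖a‖ ≠ 0 := norm_ne_zero_iff.mpr ha
    have hb' : ‖b‖ ≠ 0 := norm_ne_zero_iff.mpr hb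
    have haC : ((‖a‖ : ℝ) : ℂ) ≠ 0 := by
      exact_mod_cast Complex.ofReal_ne_zero.2 ha'
    refine ⟨(a / (‖a‖ : ℂ)) * ((‖b‖ : ℂ) / b), ?_, ?_⟩
    · rw [norm_mul, norm_div, norm_div, Complex.norm_real, Real.norm_eq_abs, Complex.norm_real, Real.norm_eq_abs,
        abs_of_nonneg (norm_nonneg a), abs_of_nonneg (norm_nonneg b),
        div_self ha', div_self hb', one_mul]
    · have h1 : (a / (‖a‖ : ℂ)) * ((‖b‖ : ℂ) / b) * b
          = (a / (‖a‖ : ℂ)) * (‖b‖ : ℂ) := by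
        rw [mul_assoc, div_mul_cancel₀ _ hb]
      rw [h1]
      have h2 : a + (a / (‖a‖ : ℂ)) * (‖b‖ : ℂ)
          = a * (((‖a‖ : ℝ) + (‖b‖ : ℝ) : ℂ)) / (‖a‖ : ℂ) := by
        field_simp
      rw [h2, norm_div, norm_mul]
      have h3 : ((‖a‖ : ℝ) + (‖b‖ : ℝ) : ℂ)
          = (((‖a‖ + ‖b‖ : ℝ)) : ℂ) := by push_cast; ring
      rw [h3, Complex.norm_real, Real.norm_eq_abs, Complex.norm_real, Real.norm_eq_abs,
        abs_of_nonneg (by positivity : (0:ℝ) ≤ ‖a‖ + ‖b‖),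
        abs_of_nonneg (norm_nonneg a),
        mul_div_assoc]
      rw [mul_div_cancel₀ _ ha']


include hRA in
/-- existence of an A-orthonormal partner, from rank(range A) ≥ 2. -/
lemma exists_partner (hrank : 2 ≤ Module.rank ℂ (LinearMap.range A.toLinearMap))
    (x : H) (hx : ‖R x‖ = 1) :
    ∃ z : H, ‖R z‖ = 1 ∧ (inner ℂ (R z) (R x) : ℂ) = 0 := by
  have hsub : LinearMap.range A.toLinearMap ≤ LinearMap.range (R : H →ₗ[ℂ] H) := by
    rintro _ ⟨y, rfl⟩
    exact ⟨R y, (hRA y).symm⟩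
  have hrankR : 2 ≤ Module.rank ℂ (LinearMap.range (R : H →ₗ[ℂ] H)) :=
    le_trans hrank (Submodule.rank_mono hsub)
  have hz0 : ∃ z₀ : H, R z₀ ∉ Submodule.span ℂ {R x} := by
    by_contra hcon
    push_neg at hcon
    have hle : LinearMap.range (R : H →ₗ[ℂ] H) ≤ Submodule.span ℂ {R x} := by
      rintro _ ⟨y, rfl⟩; exact hcon y
    have h2 := le_trans hrankR (Submodule.rank_mono hle)
    have h1 : Module.rank ℂ (Submodule.span ℂ ({R x} : Set H)) ≤ 1 := by
      simpa using rank_span_le (R := ℂ) ({R x} : Set H)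
    have := le_trans h2 h1
    norm_num at this
  obtain ⟨z₀, hz₀⟩ := hz0
  set c : ℂ := inner ℂ (R x) (R z₀) with hc
  set w : H := R z₀ - c • R x with hw
  have hw0 : w ≠ 0 := by
    intro hcon
    apply hz₀
    have h4 : R z₀ = c • R x := by rwa [hw, sub_eq_zero] at hcon
    rw [h4]
    exact Submodule.smul_mem _ _ (Submodule.mem_span_singleton_self _)
  have hxx : (inner ℂ (R x) (R x) : ℂ) = 1 := by
    rw [inner_self_eq_norm_sq_to_K, hx]; norm_num
  have hwx : (inner ℂ (R x) w : ℂ) = 0 := by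
    rw [hw, inner_sub_right, inner_smul_right, hxx, mul_one, hc, sub_self]
  have hwx' : (inner ℂ w (R x) : ℂ) = 0 := by
    rw [← inner_conj_symm, hwx, map_zero]
  set d : ℂ := ((‖w‖⁻¹ : ℝ) : ℂ) with hd
  have hwR : R (d • (z₀ - c • x)) = d • w := by
    rw [map_smul, map_sub, map_smul, hw]
  refine ⟨d • (z₀ - c • x), ?_, ?_⟩
  · rw [hwR, norm_smul, hd]
    rw [Complex.norm_real, Real.norm_eq_abs, abs_of_nonneg (by positivity)]
    exact inv_mul_cancel₀ (norm_ne_zero_iff.2 hw0)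
  · rw [hwR, inner_smul_left, hwx', mul_zero]

end Aux

section Main

variable {A R : H →L[ℂ] H} (hR : R.IsPositive) (hRA : ∀ x, A x = R (R x))

include hR hRA

lemma semiNormA_eq (x : H) : semiNormA A x = ‖R x‖ := by
  rw [semiNormA, sipA, inner_R hR hRA, ← RCLike.re_to_complex, inner_self_eq_norm_sq,
    Real.sqrt_sq (norm_nonneg _)]

lemma sipA_eq (x y : H) : sipA A x y = inner ℂ (R y) (R x) := inner_R hR hRA x y

variable {S : H →L[ℂ] H} {c : ℝ} {q : ℂ}

/-- every element of `abs '' WqA` is at most `c`. -/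
lemma wqA_elem_le (hz : ∀ x, ‖R (S x)‖ ≤ c * ‖R x‖) :
    ∀ v ∈ (fun z : ℂ => ‖z‖) '' WqA A q S, v ≤ c := by
  rintro _ ⟨w, ⟨x, y, hx, hy, -, rfl⟩, rfl⟩
  rw [semiNormA_eq hR hRA] at hx hy
  rw [sipA_eq hR hRA]
  calc ‖inner ℂ (R y) (R (S x))‖ = ‖(inner ℂ (R y) (R (S x)) : ℂ)‖ := rfl
    _ ≤ ‖R y‖ * ‖R (S x)‖ := norm_inner_le_norm _ _
    _ ≤ 1 * (c * 1) := by
        rw [hy]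
        have := hz x
        rw [hx] at this
        simpa using this
    _ = c := by ring

lemma wqA_bddAbove (hc : ∀ x, ‖R (S x)‖ ≤ c * ‖R x‖) : BddAbove ((fun z : ℂ => ‖z‖) '' WqA A q S) :=
  ⟨c, fun v hv => wqA_elem_le hR hRA hc v hv⟩

/-- the key element construction: for any `R`-unit `x` there is an admissible `y`
with value of absolute value at least `|q| * |⟪Rx, R S x⟫|`. -/
lemma lower_elem (hc : ∀ x, ‖R (S x)‖ ≤ c * ‖R x‖)
    (hrank : 2 ≤ Module.rank ℂ (LinearMap.range A.toLinearMap))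
    (hq : ‖q‖ ≤ 1) (x : H) (hx : ‖R x‖ = 1) :
    ‖q‖ * ‖inner ℂ (R x) (R (S x))‖ ≤ wqA A q S := by
  obtain ⟨z, hz1, hz2⟩ := exists_partner hR hRA hrank x hx
  set c₀ : ℝ := Real.sqrt (1 - (‖q‖)^2) with hc₀def
  have hc₀ : (0:ℝ) ≤ c₀ := Real.sqrt_nonneg _
  have hc₀sq : c₀ ^ 2 = 1 - (‖q‖)^2 := by
    rw [hc₀def, Real.sq_sqrt]
    nlinarith [norm_nonneg q]
  set s : ℂ := inner ℂ (R x) (R (S x)) with hs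
  set t : ℂ := inner ℂ (R z) (R (S x)) with ht
  obtain ⟨ω, hω1, hω2⟩ := phase_lemma (q * s) ((c₀ : ℂ) * t)
  set y : H := (starRingEnd ℂ) q • x + ((c₀ : ℂ) * (starRingEnd ℂ) ω) • z with hy
  have hxx : (inner ℂ (R x) (R x) : ℂ) = 1 := by
    rw [inner_self_eq_norm_sq_to_K, hx]; norm_num
  have hzz : (inner ℂ (R z) (R z) : ℂ) = 1 := by
    rw [inner_self_eq_norm_sq_to_K, hz1]; norm_num
  have hxz : (inner ℂ (R x) (R z) : ℂ) = 0 := by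
    rw [← inner_conj_symm, hz2, map_zero]
  have hRy : R y = (starRingEnd ℂ) q • R x + ((c₀ : ℂ) * (starRingEnd ℂ) ω) • R z := by
    rw [hy, map_add, map_smul, map_smul]
  have hRynorm : ‖R y‖ = 1 := by
    have horth : (inner ℂ ((starRingEnd ℂ) q • R x) (((c₀ : ℂ) * (starRingEnd ℂ) ω) • R z) : ℂ) = 0 := by
      rw [inner_smul_left, inner_smul_right, hxz, mul_zero, mul_zero]
    have hsq : ‖R y‖ ^ 2 = 1 := by
      rw [hRy, @norm_add_sq ℂ _ _ _ _, horth]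
      simp only [map_zero, mul_zero, add_zero, norm_smul]
      rw [norm_mul, Complex.norm_conj,
        Complex.norm_conj, hω1, Complex.norm_real, Real.norm_eq_abs, abs_of_nonneg hc₀]
      rw [hx, hz1]
      ring_nf
      nlinarith [hc₀sq]
    nlinarith [norm_nonneg (R y)]
  have hconstraint : sipA A x y = q := by
    rw [sipA_eq hR hRA, hRy, inner_add_left, inner_smul_left, inner_smul_left,
      hxx, hz2, mul_zero, add_zero, mul_one, Complex.conj_conj]
  have hvalue : sipA A (S x) y = q * s + ω * ((c₀ : ℂ) * t) := by
    rw [sipA_eq hR hRA, hRy, inner_add_left, inner_smul_left, inner_smul_left,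
      ← hs, ← ht, Complex.conj_conj, map_mul, Complex.conj_conj]
    rw [Complex.conj_ofReal]
    ring
  have hmem : sipA A (S x) y ∈ WqA A q S :=
    ⟨x, y, by rw [semiNormA_eq hR hRA, hx], by rw [semiNormA_eq hR hRA, hRynorm],
      hconstraint, rfl⟩
  have habs : ‖sipA A (S x) y‖ = ‖q * s‖ + ‖(c₀:ℂ) * t‖ := by
    rw [hvalue, hω2]
  have hle : ‖q‖ * ‖s‖ ≤ ‖sipA A (S x) y‖ := by
    rw [habs, ← norm_mul]
    have := norm_nonneg ((c₀:ℂ) * t)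
    linarith
  calc ‖q‖ * ‖s‖ ≤ ‖sipA A (S x) y‖ := hle
    _ ≤ wqA A q S := le_csSup (wqA_bddAbove hR hRA hc) ⟨_, hmem, rfl⟩

end Main

section Main2

variable {A R : H →L[ℂ] H} (hR : R.IsPositive) (hRA : ∀ x, A x = R (R x))
variable {S : H →L[ℂ] H} {c : ℝ} {q : ℂ}

include hR hRA

lemma exists_unit (hrank : 2 ≤ Module.rank ℂ (LinearMap.range A.toLinearMap)) :
    ∃ x : H, ‖R x‖ = 1 := by
  have hz0 : ∃ x₀ : H, R x₀ ≠ 0 := by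
    by_contra hcon
    push_neg at hcon
    have hsub : LinearMap.range A.toLinearMap ≤ LinearMap.range (R : H →ₗ[ℂ] H) := by
      rintro _ ⟨y, rfl⟩; exact ⟨R y, (hRA y).symm⟩
    have hle : LinearMap.range (R : H →ₗ[ℂ] H) ≤ ⊥ := by
      rintro _ ⟨y, rfl⟩; simp [hcon y]
    have h2 := le_trans (le_trans hrank (Submodule.rank_mono hsub)) (Submodule.rank_mono hle)
    simp [rank_bot] at h2
  obtain ⟨x₀, hx₀⟩ := hz0
  refine ⟨((‖R x₀‖⁻¹ : ℝ) : ℂ) • x₀, ?_⟩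
  rw [map_smul, norm_smul, Complex.norm_real, Real.norm_eq_abs,
    abs_of_nonneg (by positivity)]
  exact inv_mul_cancel₀ (norm_ne_zero_iff.2 hx₀)

lemma wqA_nonneg (hc : ∀ x, ‖R (S x)‖ ≤ c * ‖R x‖)
    (hrank : 2 ≤ Module.rank ℂ (LinearMap.range A.toLinearMap))
    (hq : ‖q‖ ≤ 1) : 0 ≤ wqA A q S := by
  obtain ⟨x, hx⟩ := exists_unit hR hRA hrank
  have := lower_elem hR hRA hc hrank hq x hx
  have h0 : (0:ℝ) ≤ ‖q‖ * ‖inner ℂ (R x) (R (S x))‖ := by positivity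
  linarith

lemma diag_bound (hc : ∀ x, ‖R (S x)‖ ≤ c * ‖R x‖)
    (hrank : 2 ≤ Module.rank ℂ (LinearMap.range A.toLinearMap))
    (hq : ‖q‖ ≤ 1) (u : H) :
    ‖q‖ * ‖inner ℂ (R u) (R (S u))‖ ≤ ‖R u‖ ^ 2 * wqA A q S := by
  rcases eq_or_lt_of_le (norm_nonneg (R u)) with h0 | h0
  · have hz : ‖inner ℂ (R u) (R (S u))‖ = 0 := by
      have h1 : ‖(inner ℂ (R u) (R (S u)) : ℂ)‖ ≤ ‖R u‖ * ‖R (S u)‖ := norm_inner_le_norm _ _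
      rw [← h0, zero_mul] at h1
      exact le_antisymm h1 (norm_nonneg _)
    rw [hz, mul_zero, ← h0]
    norm_num
  · set d : ℂ := ((‖R u‖⁻¹ : ℝ) : ℂ) with hd
    have hdabs : ‖d‖ = ‖R u‖⁻¹ := by
      rw [hd, Complex.norm_real, Real.norm_eq_abs, abs_of_nonneg (by positivity)]
    have hu' : ‖R (d • u)‖ = 1 := by
      rw [map_smul, norm_smul, hd, Complex.norm_real, Real.norm_eq_abs,
        abs_of_nonneg (by positivity)]
      exact inv_mul_cancel₀ (ne_of_gt h0)
    have h1 := lower_elem hR hRA hc hrank hq (d • u) hu'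
    have h2 : (inner ℂ (R (d • u)) (R (S (d • u))) : ℂ)
        = (starRingEnd ℂ) d * (d * inner ℂ (R u) (R (S u))) := by
      rw [map_smul, map_smul, map_smul, inner_smul_left, inner_smul_right]
    rw [h2, norm_mul, norm_mul, Complex.norm_conj, hdabs] at h1
    have h4 : (0:ℝ) < ‖R u‖ ^ 2 := by positivity
    have h5 := mul_le_mul_of_nonneg_right h1 h4.le
    have h6 : ‖q‖ * (‖R u‖⁻¹ * (‖R u‖⁻¹ * ‖inner ℂ (R u) (R (S u))‖)) * ‖R u‖ ^ 2
        = ‖q‖ * ‖inner ℂ (R u) (R (S u))‖ := by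
      rw [pow_two]
      field_simp
    rw [h6] at h5
    nlinarith [h5]

lemma polarization (x y : H) :
    (inner ℂ (R y) (R (S x)) : ℂ)
      = ((inner ℂ (R (x+y)) (R (S (x+y))) : ℂ) - (inner ℂ (R (x-y)) (R (S (x-y))) : ℂ)
        + Complex.I * (inner ℂ (R (x + Complex.I • y)) (R (S (x + Complex.I • y))) : ℂ)
        - Complex.I * (inner ℂ (R (x - Complex.I • y)) (R (S (x - Complex.I • y))) : ℂ)) / 4 := by
  simp only [map_add, map_sub, map_smul, inner_add_left, inner_add_right, inner_sub_left,
    inner_sub_right, inner_smul_left, inner_smul_right, Complex.conj_I]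
  ring_nf
  simp [Complex.I_sq]
  ring

lemma offdiag_bound (hc : ∀ x, ‖R (S x)‖ ≤ c * ‖R x‖)
    (hrank : 2 ≤ Module.rank ℂ (LinearMap.range A.toLinearMap))
    (hq : ‖q‖ ≤ 1) (x y : H) (hx : ‖R x‖ ≤ 1) (hy : ‖R y‖ ≤ 1) :
    ‖inner ℂ (R y) (R (S x))‖ * ‖q‖ ≤ 2 * wqA A q S := by
  have hw0 := wqA_nonneg hR hRA hc hrank hq
  set w1 : ℂ := (inner ℂ (R (x+y)) (R (S (x+y))) : ℂ) with hw1
  set w2 : ℂ := (inner ℂ (R (x-y)) (R (S (x-y))) : ℂ) with hw2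
  set w3 : ℂ := (inner ℂ (R (x + Complex.I • y)) (R (S (x + Complex.I • y))) : ℂ) with hw3
  set w4 : ℂ := (inner ℂ (R (x - Complex.I • y)) (R (S (x - Complex.I • y))) : ℂ) with hw4
  have htri : ‖w1 - w2 + Complex.I * w3 - Complex.I * w4‖
      ≤ ‖w1‖ + ‖w2‖ + ‖w3‖ + ‖w4‖ := by
    calc ‖w1 - w2 + Complex.I * w3 - Complex.I * w4‖
        ≤ ‖w1 - w2 + Complex.I * w3‖ + ‖Complex.I * w4‖ := norm_sub_le _ _
      _ ≤ (‖w1 - w2‖ + ‖Complex.I * w3‖) + ‖Complex.I * w4‖ := by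
          gcongr
          exact norm_add_le _ _
      _ ≤ ((‖w1‖ + ‖w2‖) + ‖Complex.I * w3‖) + ‖Complex.I * w4‖ := by
          gcongr
          exact norm_sub_le _ _
      _ = ‖w1‖ + ‖w2‖ + ‖w3‖ + ‖w4‖ := by
          rw [norm_mul, norm_mul, Complex.norm_I, one_mul, one_mul]
  have habs : ‖inner ℂ (R y) (R (S x))‖
      ≤ (‖w1‖ + ‖w2‖ + ‖w3‖ + ‖w4‖) / 4 := by
    have hpol := polarization hR hRA (S := S) x y
    rw [← hw1, ← hw2, ← hw3, ← hw4] at hpol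
    rw [hpol]
    rw [norm_div]
    simp only [Complex.norm_ofNat]
    linarith [htri]
  have hdiag : ∀ u : H, ‖q‖ * ‖(inner ℂ (R u) (R (S u)) : ℂ)‖
      ≤ ‖R u‖ ^ 2 * wqA A q S := fun u => diag_bound hR hRA hc hrank hq u
  have hpar1 : ‖R (x+y)‖ ^ 2 + ‖R (x-y)‖ ^ 2 = 2 * (‖R x‖ ^ 2 + ‖R y‖ ^ 2) := by
    rw [map_add, map_sub]
    have hpl := parallelogram_law_with_norm ℂ (R x) (R y)
    simp only [pow_two]
    linarith [hpl]
  have hpar2 : ‖R (x + Complex.I • y)‖ ^ 2 + ‖R (x - Complex.I • y)‖ ^ 2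
      = 2 * (‖R x‖ ^ 2 + ‖R y‖ ^ 2) := by
    simp only [map_add, map_sub, map_smul]
    have hpl := parallelogram_law_with_norm ℂ (R x) (Complex.I • R y)
    have hIy : ‖Complex.I • R y‖ = ‖R y‖ := by
      rw [norm_smul, Complex.norm_I, one_mul]
    rw [hIy] at hpl
    simp only [pow_two]
    linarith [hpl]
  have hx2 : ‖R x‖ ^ 2 ≤ 1 := by nlinarith [norm_nonneg (R x)]
  have hy2 : ‖R y‖ ^ 2 ≤ 1 := by nlinarith [norm_nonneg (R y)]
  have hsum : ‖R (x+y)‖ ^ 2 + ‖R (x-y)‖ ^ 2 + ‖R (x + Complex.I • y)‖ ^ 2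
      + ‖R (x - Complex.I • y)‖ ^ 2 ≤ 8 := by linarith [hpar1, hpar2]
  have h1 := hdiag (x+y); have h2 := hdiag (x-y)
  have h3 := hdiag (x + Complex.I • y); have h4 := hdiag (x - Complex.I • y)
  rw [← hw1] at h1; rw [← hw2] at h2; rw [← hw3] at h3; rw [← hw4] at h4
  have hq0' : (0:ℝ) ≤ ‖q‖ := norm_nonneg q
  have hstep : (‖w1‖ + ‖w2‖ + ‖w3‖ + ‖w4‖) / 4
      * ‖q‖ ≤ 2 * wqA A q S := by
    have hsum2 : ‖q‖ * ‖w1‖ + ‖q‖ * ‖w2‖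
        + ‖q‖ * ‖w3‖ + ‖q‖ * ‖w4‖
        ≤ (‖R (x+y)‖ ^ 2 + ‖R (x-y)‖ ^ 2 + ‖R (x + Complex.I • y)‖ ^ 2
          + ‖R (x - Complex.I • y)‖ ^ 2) * wqA A q S := by
      calc ‖q‖ * ‖w1‖ + ‖q‖ * ‖w2‖
          + ‖q‖ * ‖w3‖ + ‖q‖ * ‖w4‖
          ≤ ‖R (x+y)‖ ^ 2 * wqA A q S + ‖R (x-y)‖ ^ 2 * wqA A q S
            + ‖R (x + Complex.I • y)‖ ^ 2 * wqA A q S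
            + ‖R (x - Complex.I • y)‖ ^ 2 * wqA A q S := by linarith [h1, h2, h3, h4]
        _ = _ := by ring
    have h8 : (‖R (x+y)‖ ^ 2 + ‖R (x-y)‖ ^ 2 + ‖R (x + Complex.I • y)‖ ^ 2
        + ‖R (x - Complex.I • y)‖ ^ 2) * wqA A q S ≤ 8 * wqA A q S :=
      mul_le_mul_of_nonneg_right hsum hw0
    linarith [hsum2, h8]
  calc ‖inner ℂ (R y) (R (S x))‖ * ‖q‖
      ≤ (‖w1‖ + ‖w2‖ + ‖w3‖ + ‖w4‖) / 4
        * ‖q‖ := mul_le_mul_of_nonneg_right habs hq0'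
    _ ≤ 2 * wqA A q S := hstep

end Main2

section Main3

variable {A R : H →L[ℂ] H} (hR : R.IsPositive) (hRA : ∀ x, A x = R (R x))
variable {S : H →L[ℂ] H} {c : ℝ} {q : ℂ}

include hR hRA

lemma opNormA_bdd (hc : ∀ x, ‖R (S x)‖ ≤ c * ‖R x‖) (hc0 : 0 ≤ c) :
    BddAbove ((fun x => semiNormA A (S x)) '' {x : H | semiNormA A x ≤ 1}) := by
  refine ⟨c, ?_⟩
  rintro _ ⟨x, hx, rfl⟩
  rw [Set.mem_setOf_eq, semiNormA_eq hR hRA] at hx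
  show semiNormA A (S x) ≤ c
  rw [semiNormA_eq hR hRA]
  calc ‖R (S x)‖ ≤ c * ‖R x‖ := hc x
    _ ≤ c * 1 := mul_le_mul_of_nonneg_left hx hc0
    _ = c := mul_one c

lemma opNormA_nonneg (hc : ∀ x, ‖R (S x)‖ ≤ c * ‖R x‖) (hc0 : 0 ≤ c) :
    0 ≤ opNormA A S := by
  have hmem : (0:ℝ) ∈ (fun x => semiNormA A (S x)) '' {x : H | semiNormA A x ≤ 1} := by
    refine ⟨0, ?_, ?_⟩
    · rw [Set.mem_setOf_eq, semiNormA_eq hR hRA, map_zero, norm_zero]; norm_num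
    · show semiNormA A (S 0) = 0
      rw [semiNormA_eq hR hRA, map_zero, map_zero, norm_zero]
  exact le_csSup (opNormA_bdd hR hRA hc hc0) hmem

lemma wqA_le_opNormA (hc : ∀ x, ‖R (S x)‖ ≤ c * ‖R x‖) (hc0 : 0 ≤ c) :
    wqA A q S ≤ opNormA A S := by
  refine Real.sSup_le ?_ (opNormA_nonneg hR hRA hc hc0)
  rintro _ ⟨z, ⟨x, y, hx, hy, -, rfl⟩, rfl⟩
  rw [semiNormA_eq hR hRA] at hx hy
  rw [sipA_eq hR hRA]
  have h1 : ‖inner ℂ (R y) (R (S x))‖ ≤ ‖R (S x)‖ := by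
    calc ‖inner ℂ (R y) (R (S x))‖ = ‖(inner ℂ (R y) (R (S x)) : ℂ)‖ := rfl
      _ ≤ ‖R y‖ * ‖R (S x)‖ := norm_inner_le_norm _ _
      _ = ‖R (S x)‖ := by rw [hy, one_mul]
  refine le_trans h1 ?_
  have hmem : ‖R (S x)‖ ∈ (fun x => semiNormA A (S x)) '' {x : H | semiNormA A x ≤ 1} :=
    ⟨x, by rw [Set.mem_setOf_eq, semiNormA_eq hR hRA, hx],
      by show semiNormA A (S x) = ‖R (S x)‖; rw [semiNormA_eq hR hRA]⟩
  exact le_csSup (opNormA_bdd hR hRA hc hc0) hmem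

lemma opNormA_le_wqA (hc : ∀ x, ‖R (S x)‖ ≤ c * ‖R x‖)
    (hrank : 2 ≤ Module.rank ℂ (LinearMap.range A.toLinearMap))
    (hq : ‖q‖ ≤ 1) (hq0 : q ≠ 0) :
    opNormA A S ≤ 2 * wqA A q S / ‖q‖ := by
  have hqpos : 0 < ‖q‖ := norm_pos_iff.mpr hq0
  have hw0 := wqA_nonneg hR hRA hc hrank hq
  refine Real.sSup_le ?_ (by positivity)
  rintro _ ⟨x, hx, rfl⟩
  rw [Set.mem_setOf_eq, semiNormA_eq hR hRA] at hx
  show semiNormA A (S x) ≤ 2 * wqA A q S / ‖q‖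
  rw [semiNormA_eq hR hRA]
  rcases eq_or_lt_of_le (norm_nonneg (R (S x))) with h0 | h0
  · rw [← h0]; positivity
  · set d : ℂ := ((‖R (S x)‖⁻¹ : ℝ) : ℂ) with hd
    set y : H := d • S x with hy
    have hRy : ‖R y‖ = 1 := by
      rw [hy, map_smul, norm_smul, hd, Complex.norm_real, Real.norm_eq_abs,
        abs_of_nonneg (by positivity)]
      exact inv_mul_cancel₀ (ne_of_gt h0)
    have hinner : ‖inner ℂ (R y) (R (S x))‖ = ‖R (S x)‖ := by
      rw [hy, map_smul, inner_smul_left, norm_mul, Complex.norm_conj, hd,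
        Complex.norm_real, Real.norm_eq_abs, abs_of_nonneg (by positivity)]
      rw [inner_self_eq_norm_sq_to_K]
      simp only [norm_pow, Complex.norm_real, RCLike.norm_ofReal, Real.norm_eq_abs, abs_of_nonneg (norm_nonneg (R (S x)))]
      field_simp
    have hoff := offdiag_bound hR hRA hc hrank hq x y hx (le_of_eq hRy)
    rw [hinner] at hoff
    rw [le_div_iff₀ hqpos]
    linarith [hoff]

end Main3

section Final

lemma exists_sqrt (A : H →L[ℂ] H) (hA : A.IsPositive) :
    ∃ R : H →L[ℂ] H, R.IsPositive ∧ ∀ x, A x = R (R x) := by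
  have h0 : (0:H →L[ℂ] H) ≤ A := (A.nonneg_iff_isPositive).2 hA
  refine ⟨CFC.sqrt A, (nonneg_iff_isPositive _).1 (CFC.sqrt_nonneg A), fun x => ?_⟩
  have h := CFC.sq_sqrt A h0
  rw [pow_two] at h
  conv_lhs => rw [← h]
  rfl

lemma adj_pow {A T W : H →L[ℂ] H} (hW : A.comp W = (adjoint T).comp A) (n : ℕ) :
    A.comp (W ^ n) = (adjoint (T ^ n)).comp A := by
  have key : A * W ^ n = (adjoint T) ^ n * A := by
    induction n with
    | zero => simp
    | succ k ih =>
      have hW' : A * W = adjoint T * A := hW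
      rw [pow_succ, pow_succ, ← mul_assoc, ih, mul_assoc, hW', ← mul_assoc]
  have h2 : adjoint (T ^ n) = (adjoint T) ^ n := by
    rw [← star_eq_adjoint, ← star_eq_adjoint, star_pow]
  rw [h2]
  exact key

theorem stmt_12 (A : H →L[ℂ] H) (hA : A.IsPositive)
    (hrank : 2 ≤ Module.rank ℂ (LinearMap.range A.toLinearMap))
    (T : H →L[ℂ] H)
    (hadj : ∃ W : H →L[ℂ] H, A.comp W = (ContinuousLinearMap.adjoint T).comp A)
    (q : ℂ) (hq : ‖q‖ ≤ 1) (hq0 : q ≠ 0)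
    (r : ℝ) (hr : 0 ≤ r)
    (hlim : Tendsto (fun n : ℕ => opNormA A (T ^ n) ^ ((1 : ℝ) / n)) atTop (nhds r)) :
    Tendsto (fun n : ℕ => wqA A q (T ^ n) ^ ((1 : ℝ) / n)) atTop (nhds r) := by
  obtain ⟨W, hW⟩ := hadj
  obtain ⟨R, hR, hRA⟩ := exists_sqrt A hA
  have hAsa : adjoint A = A := by
    rw [← star_eq_adjoint]; exact hA.isSelfAdjoint
  -- per-n A-boundedness constants
  have hboundn : ∀ n : ℕ, ∃ c : ℝ, 0 ≤ c ∧ ∀ x, ‖R ((T ^ n) x)‖ ≤ c * ‖R x‖ := by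
    intro n
    have hWn : A.comp (W ^ n) = (adjoint (T ^ n)).comp A := adj_pow hW n
    have hTn : A.comp (T ^ n) = (adjoint (W ^ n)).comp A := by
      have := congrArg adjoint hWn
      rw [adjoint_comp, adjoint_comp, hAsa, adjoint_adjoint] at this
      exact this.symm
    set D : H →L[ℂ] H := (W ^ n).comp (T ^ n) with hD
    have hDsa : A.comp D = (adjoint D).comp A := by
      rw [hD, adjoint_comp, ← comp_assoc, hWn, comp_assoc, hTn, ← comp_assoc]
    refine ⟨Real.sqrt ‖D‖, Real.sqrt_nonneg _, fun x => ?_⟩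
    have h1 : ‖R ((T ^ n) x)‖ ^ 2 ≤ ‖R ((W ^ n) ((T ^ n) x))‖ * ‖R x‖ :=
      step_ineq hR hRA hTn x
    have h2 : ‖R (D x)‖ ≤ ‖D‖ * ‖R x‖ := selfadj_bound hR hRA hDsa x
    have h1' : ‖R ((T ^ n) x)‖ ^ 2 ≤ ‖R (D x)‖ * ‖R x‖ := h1
    have h3 : ‖R ((T ^ n) x)‖ ^ 2 ≤ (Real.sqrt ‖D‖ * ‖R x‖) ^ 2 := by
      have hsq : (Real.sqrt ‖D‖) ^ 2 = ‖D‖ := Real.sq_sqrt (norm_nonneg D)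
      have hexp2 : (Real.sqrt ‖D‖ * ‖R x‖) ^ 2 = ‖D‖ * (‖R x‖ * ‖R x‖) := by
        rw [mul_pow, hsq]; ring
      rw [hexp2]
      have h4 := mul_le_mul_of_nonneg_right h2 (norm_nonneg (R x))
      calc ‖R ((T ^ n) x)‖ ^ 2 ≤ ‖R (D x)‖ * ‖R x‖ := h1'
        _ ≤ ‖D‖ * ‖R x‖ * ‖R x‖ := h4
        _ = ‖D‖ * (‖R x‖ * ‖R x‖) := by ring
    calc ‖R ((T ^ n) x)‖ = Real.sqrt (‖R ((T ^ n) x)‖ ^ 2) :=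
          (Real.sqrt_sq (norm_nonneg _)).symm
      _ ≤ Real.sqrt ((Real.sqrt ‖D‖ * ‖R x‖) ^ 2) := Real.sqrt_le_sqrt h3
      _ = Real.sqrt ‖D‖ * ‖R x‖ := Real.sqrt_sq (by positivity)
  -- per-n inequalities
  have key1 : ∀ n : ℕ, wqA A q (T ^ n) ≤ opNormA A (T ^ n) := by
    intro n
    obtain ⟨c, hc0, hc⟩ := hboundn n
    exact wqA_le_opNormA hR hRA hc hc0
  have key3 : ∀ n : ℕ, 0 ≤ wqA A q (T ^ n) := by
    intro n
    obtain ⟨c, hc0, hc⟩ := hboundn n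
    exact wqA_nonneg hR hRA hc hrank hq
  have key4 : ∀ n : ℕ, 0 ≤ opNormA A (T ^ n) := by
    intro n
    obtain ⟨c, hc0, hc⟩ := hboundn n
    exact opNormA_nonneg hR hRA hc hc0
  set κ : ℝ := ‖q‖ / 2 with hκdef
  have hκ : 0 < κ := by
    have := norm_pos_iff.mpr hq0
    rw [hκdef]; linarith
  have key2 : ∀ n : ℕ, κ * opNormA A (T ^ n) ≤ wqA A q (T ^ n) := by
    intro n
    obtain ⟨c, hc0, hc⟩ := hboundn n
    have h := opNormA_le_wqA hR hRA hc hrank hq hq0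
    rw [le_div_iff₀ (norm_pos_iff.mpr hq0)] at h
    rw [hκdef]
    nlinarith [h]
  have hexp : ∀ n : ℕ, (0:ℝ) ≤ (1:ℝ)/n := fun n => by positivity
  have hge : ∀ n : ℕ, (κ * opNormA A (T ^ n)) ^ ((1:ℝ)/n) ≤ wqA A q (T ^ n) ^ ((1:ℝ)/n) :=
    fun n => Real.rpow_le_rpow (mul_nonneg hκ.le (key4 n)) (key2 n) (hexp n)
  have hle : ∀ n : ℕ, wqA A q (T ^ n) ^ ((1:ℝ)/n) ≤ opNormA A (T ^ n) ^ ((1:ℝ)/n) :=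
    fun n => Real.rpow_le_rpow (key3 n) (key1 n) (hexp n)
  have hκlim : Tendsto (fun n : ℕ => κ ^ ((1:ℝ)/n)) atTop (nhds 1) := by
    have h0 : Tendsto (fun n : ℕ => (1:ℝ)/n) atTop (nhds 0) :=
      tendsto_one_div_atTop_nhds_zero_nat
    have hcont : ContinuousAt (fun e : ℝ => κ ^ e) 0 :=
      Real.continuousAt_const_rpow (ne_of_gt hκ)
    have := hcont.tendsto.comp h0
    simpa only [Function.comp_def, Real.rpow_zero] using this
  have hmul := hκlim.mul hlim
  rw [one_mul] at hmul
  have hlow : Tendsto (fun n : ℕ => (κ * opNormA A (T ^ n)) ^ ((1:ℝ)/n)) atTop (nhds r) := by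
    refine hmul.congr (fun n => ?_)
    exact (Real.mul_rpow hκ.le (key4 n)).symm
  exact tendsto_of_tendsto_of_tendsto_of_le_of_le hlow hlim hge hle

end Final
end
end

section
/- Let T be an A-bounded operator with AT² = 0 and AT ≠ 0 (T is A-nilpotent of index 2), suppose the range of A is closed, and let q ∈ D. Then w_{q,A}(T) ≤ ((1 + √(1−|q|²))/2)·‖T‖_A, where ‖T‖_A = sup{‖Tx‖_A : x ∈ H, ‖x‖_A ≤ 1}; moreover W_{q,A}(T) is circular about the origin: for every λ ∈ W_{q,A}(T) and every θ ∈ ℝ, e^{iθ}λ ∈ W_{q,A}(T). -/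
noncomputable section

open Filter

variable {H : Type*} [NormedAddCommGroup H] [InnerProductSpace ℂ H] [CompleteSpace H]

set_option maxHeartbeats 2000000
set_option synthInstance.maxHeartbeats 400000

lemma keyIneq {M p r Q s : ℝ} (hp : 0 ≤ p) (hr : 0 ≤ r) (hQ : 0 ≤ Q) (hs : 0 ≤ s)
    (hQs : Q^2 + s^2 = 1) (hM : 0 ≤ M) (hc : p^2*M^2 + r^4 ≤ r^2*M^2) (hpr : p ≤ r) :
    Q*p + s*Real.sqrt (r^2 - p^2) ≤ (1+s)/2 * M := by
  set u := Real.sqrt (r^2 - p^2) with hudef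
  have hu : 0 ≤ u := Real.sqrt_nonneg _
  have hu2 : u^2 = r^2 - p^2 := Real.sq_sqrt (by nlinarith)
  have hsq : (p^2 + u^2)^2 ≤ (u*M)^2 := by nlinarith
  have hkey : p^2 + u^2 ≤ u*M := by
    have h1 : p^2+u^2 = Real.sqrt ((p^2+u^2)^2) := (Real.sqrt_sq (by positivity)).symm
    have h2 : u*M = Real.sqrt ((u*M)^2) := (Real.sqrt_sq (by positivity)).symm
    rw [h1, h2]; exact Real.sqrt_le_sqrt hsq
  have huM : u ≤ M := by nlinarith
  have hs1 : s ≤ 1 := by nlinarith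
  have hR : 0 ≤ (1+s)/2*M - s*u := by nlinarith
  have h2 : (Q*p)^2 ≤ ((1+s)/2*M - s*u)^2 := by
    have hmul : Q^2*(p^2+u^2) ≤ Q^2*(u*M) := by nlinarith [sq_nonneg Q]
    nlinarith [sq_nonneg (s*M + M - 2*u)]
  have h3 : Q*p ≤ (1+s)/2*M - s*u := by
    have h1 : Q*p = Real.sqrt ((Q*p)^2) := (Real.sqrt_sq (by positivity)).symm
    rw [h1, ← Real.sqrt_sq hR]; exact Real.sqrt_le_sqrt h2
  linarith

lemma norm_eq_of_inner_self_eq {a b : H} (h : (inner ℂ a a : ℂ) = inner ℂ b b) : ‖a‖ = ‖b‖ := by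
  have h1 : ((‖a‖:ℂ))^2 = ((‖b‖:ℂ))^2 := by
    rw [inner_self_eq_norm_sq_to_K (𝕜 := ℂ), inner_self_eq_norm_sq_to_K (𝕜 := ℂ)] at h
    exact h
  have h2 : ‖a‖^2 = ‖b‖^2 := by exact_mod_cast h1
  calc ‖a‖ = Real.sqrt (‖a‖^2) := (Real.sqrt_sq (norm_nonneg _)).symm
    _ = Real.sqrt (‖b‖^2) := by rw [h2]
    _ = ‖b‖ := Real.sqrt_sq (norm_nonneg _)

lemma rot_inner (K : Submodule ℂ H) [CompleteSpace K] {e : ℂ} (he : ‖e‖ = 1) (η ξ : H) :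
    (inner ℂ (e • (η - (K.orthogonalProjectionOnto η : H)) + (K.orthogonalProjectionOnto η : H))
        (e • (ξ - (K.orthogonalProjectionOnto ξ : H)) + (K.orthogonalProjectionOnto ξ : H)) : ℂ)
      = inner ℂ η ξ := by
  set Pη := (K.orthogonalProjectionOnto η : H) with hPη
  set Pξ := (K.orthogonalProjectionOnto ξ : H) with hPξ
  have h1 : (inner ℂ (η - Pη) Pξ : ℂ) = 0 :=
    Submodule.inner_left_of_mem_orthogonal (SetLike.coe_mem _)
      (Submodule.sub_starProjection_mem_orthogonal (K := K) η)
  have h2 : (inner ℂ Pη (ξ - Pξ) : ℂ) = 0 :=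
    (inner_eq_zero_symm).2 (Submodule.inner_left_of_mem_orthogonal (SetLike.coe_mem _)
      (Submodule.sub_starProjection_mem_orthogonal (K := K) ξ))
  have hee : (starRingEnd ℂ) e * e = 1 := by
    rw [mul_comm, Complex.mul_conj, Complex.normSq_eq_norm_sq, he]
    norm_num
  have hη : η = (η - Pη) + Pη := by abel
  have hξ : ξ = (ξ - Pξ) + Pξ := by abel
  conv_rhs => rw [hη, hξ]
  simp only [inner_add_left, inner_add_right, inner_smul_left, inner_smul_right, h1, h2,
    mul_zero, add_zero, zero_add]
  ring_nf
  rw [mul_comm e ((starRingEnd ℂ) e)] at *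
  linear_combination (inner ℂ (η - Pη) (ξ - Pξ) : ℂ) * hee

lemma rot_inner_mem (K : Submodule ℂ H) [CompleteSpace K] (e : ℂ) (η : H) {ζ : H} (hζ : ζ ∈ K) :
    (inner ℂ (e • (η - (K.orthogonalProjectionOnto η : H)) + (K.orthogonalProjectionOnto η : H))
        (e • ζ) : ℂ) = e * inner ℂ η ζ := by
  set Pη := (K.orthogonalProjectionOnto η : H) with hPη
  have h1 : (inner ℂ (η - Pη) ζ : ℂ) = 0 :=
    Submodule.inner_left_of_mem_orthogonal hζ
      (Submodule.sub_starProjection_mem_orthogonal (K := K) η)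
  have hη : (inner ℂ Pη ζ : ℂ) = inner ℂ η ζ := by
    have : η = (η - Pη) + Pη := by abel
    rw [this, inner_add_left, h1, zero_add]
  simp only [inner_add_left, inner_smul_left, inner_smul_right, h1, mul_zero, add_zero, hη]
  ring

theorem stmt_16 (A : H →L[ℂ] H) (hA : A.IsPositive)
    (T : H →L[ℂ] H) (hT : ABounded A T)
    (hnil2 : A.comp (T ^ 2) = 0) (hnil1 : A.comp T ≠ 0)
    (hclosed : IsClosed ((LinearMap.range A.toLinearMap : Submodule ℂ H) : Set H))
    (q : ℂ) (hq : ‖q‖ ≤ 1) :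
    wqA A q T ≤ (1 + Real.sqrt (1 - ‖q‖ ^ 2)) / 2 * opNormA A T ∧
      ∀ lam ∈ WqA A q T, ∀ θ : ℝ, Complex.exp (θ * Complex.I) * lam ∈ WqA A q T := by
  classical
  obtain ⟨c, hc, hTb⟩ := hT
  set S := CFC.sqrt A with hSdef
  have hA0 : (0:H→L[ℂ]H) ≤ A := (ContinuousLinearMap.nonneg_iff_isPositive A).2 hA
  have hSpos : S.IsPositive := (ContinuousLinearMap.nonneg_iff_isPositive _).1 (CFC.sqrt_nonneg A)
  have hSsq : ∀ v, S (S v) = A v := by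
    intro v
    have h := CFC.sq_sqrt A hA0
    calc S (S v) = (S^2) v := by rw [pow_two]; rfl
      _ = A v := by rw [hSdef, h]
  have hSadj : ∀ v w : H, (inner ℂ (S v) w : ℂ) = inner ℂ v (S w) := by
    intro v w
    have h : ContinuousLinearMap.adjoint S = S := hSpos.isSelfAdjoint
    conv_lhs => rw [← h]
    rw [ContinuousLinearMap.adjoint_inner_left]
  have hsip : ∀ v w, sipA A v w = (inner ℂ (S w) (S v) : ℂ) := by
    intro v w
    rw [sipA, ← hSsq, ← hSadj]
  have hsn : ∀ v, semiNormA A v = ‖S v‖ := by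
    intro v
    rw [semiNormA, hsip]
    rw [inner_self_eq_norm_sq_to_K (𝕜 := ℂ)]
    norm_cast
    exact Real.sqrt_sq (norm_nonneg _)
  have hTS : ∀ u, ‖S (T u)‖ ≤ c * ‖S u‖ := by
    intro u; have := hTb u; rwa [hsn, hsn] at this
  have hST2 : ∀ u, S (T (T u)) = 0 := by
    intro u
    have h0 : A (T (T u)) = 0 := by
      have := congrArg (fun f : H →L[ℂ] H => f u) hnil2
      simpa [pow_two, ContinuousLinearMap.mul_apply] using this
    have h1 : (inner ℂ (S (T (T u))) (S (T (T u))) : ℂ) = 0 := by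
      rw [hSadj, hSsq, h0, inner_zero_right]
    exact inner_self_eq_zero.1 h1
  -- opNormA facts
  set M := opNormA A T with hMdef
  have hbdd : BddAbove ((fun x => semiNormA A (T x)) '' {x : H | semiNormA A x ≤ 1}) := by
    refine ⟨c, ?_⟩
    rintro z ⟨x, hx, rfl⟩
    calc semiNormA A (T x) ≤ c * semiNormA A x := hTb x
      _ ≤ c * 1 := by have := hx; exact mul_le_mul_of_nonneg_left hx hc.le
      _ = c := mul_one c
  have hM0 : 0 ≤ M := by
    have hmem : (0:ℝ) ∈ (fun x => semiNormA A (T x)) '' {x : H | semiNormA A x ≤ 1} := by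
      refine ⟨0, by simp [hsn], ?_⟩
      simp [hsn]
    exact le_csSup hbdd hmem
  have hMle : ∀ u : H, ‖S u‖ ≤ 1 → ‖S (T u)‖ ≤ M := by
    intro u hu
    have hmem : ‖S (T u)‖ ∈ (fun x => semiNormA A (T x)) '' {x : H | semiNormA A x ≤ 1} :=
      ⟨u, by simpa [hsn] using hu, by simpa using hsn (T u)⟩
    exact le_csSup hbdd hmem
  have hMkey : ∀ u : H, ‖S (T u)‖ ≤ M * ‖S u‖ := by
    intro u
    by_cases h : ‖S u‖ = 0
    · have h1 : ‖S (T u)‖ ≤ 0 := by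
        have := hTS u; rw [h, mul_zero] at this; exact this
      have h2 : ‖S (T u)‖ = 0 := le_antisymm h1 (norm_nonneg _)
      rw [h, h2, mul_zero]
    · have hr : 0 < ‖S u‖ := lt_of_le_of_ne (norm_nonneg _) (Ne.symm h)
      set r := ‖S u‖ with hrdef
      have h1 : ‖S (((r:ℂ))⁻¹ • u)‖ = 1 := by
        rw [map_smul, norm_smul]
        simp [norm_inv, Complex.norm_real, abs_of_pos hr, ← hrdef]
        field_simp
      have h2 : ‖S (T (((r:ℂ))⁻¹ • u))‖ ≤ M := hMle _ (le_of_eq h1)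
      rw [map_smul, map_smul, norm_smul] at h2
      have h3 : ‖((r:ℂ))⁻¹‖ = r⁻¹ := by
        simp [norm_inv, Complex.norm_real, abs_of_pos hr]
      rw [h3] at h2
      calc ‖S (T u)‖ = r * (r⁻¹ * ‖S (T u)‖) := by field_simp
        _ ≤ r * M := by
            apply mul_le_mul_of_nonneg_left _ hr.le
            exact h2
        _ = M * r := mul_comm _ _
  -- Part 1: the norm bound
  constructor
  · rw [wqA]
    set s := Real.sqrt (1 - ‖q‖ ^ 2) with hsdef
    have hs0 : 0 ≤ s := Real.sqrt_nonneg _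
    have hQ0 : 0 ≤ ‖q‖ := norm_nonneg q
    have hQs : ‖q‖ ^ 2 + s ^ 2 = 1 := by
      rw [hsdef, Real.sq_sqrt (by nlinarith)]; ring
    have hRHS0 : 0 ≤ (1 + s) / 2 * M := by positivity
    apply Real.sSup_le _ hRHS0
    rintro a ⟨z, ⟨x, y, hx, hy, hxy, hz⟩, rfl⟩
    rw [hsn] at hx hy
    rw [hsip] at hxy hz
    set ξ := S x with hξdef
    set η := S y with hηdef
    set ζ := S (T x) with hζdef
    by_cases hζ0 : ζ = 0
    · rw [hz, hζ0, inner_zero_right]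
      simpa using hRHS0
    · have hr : 0 < ‖ζ‖ := norm_pos_iff.2 hζ0
      set r := ‖ζ‖ with hrdef
      have hrM : r ≤ M := by
        have := hMkey x
        rwa [← hζdef, ← hξdef, ← hrdef, hx, mul_one] at this
      set d : ℂ := inner ℂ ξ ζ with hddef
      set p := ‖d‖ with hpdef
      have hp0 : 0 ≤ p := norm_nonneg _
      have hpr : p ≤ r := by
        calc p ≤ ‖ξ‖ * ‖ζ‖ := norm_inner_le_norm ξ ζ
          _ = r := by rw [hx, one_mul]
      -- the constraint from nilpotency
      have hcon : p^2*M^2 + r^4 ≤ r^2*M^2 := by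
        set β : ℂ := -((starRingEnd ℂ) d) / ((r:ℂ)^2) with hβdef
        have hSx' : S (x + β • T x) = ξ + β • ζ := by
          rw [map_add, map_smul]
        have hSTx' : S (T (x + β • T x)) = ζ := by
          rw [map_add, map_smul, map_add, map_smul, hST2, smul_zero, add_zero]
        have hm : r ≤ M * ‖ξ + β • ζ‖ := by
          have := hMkey (x + β • T x)
          rwa [hSTx', hSx'] at this
        have hζζ : (inner ℂ ζ ζ : ℂ) = ((r:ℂ))^2 := by
          rw [inner_self_eq_norm_sq_to_K]; norm_cast
        have hζξ : (inner ℂ ζ ξ : ℂ) = (starRingEnd ℂ) d := by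
          rw [hddef, ← inner_conj_symm]
        have hr2c : ((r:ℂ))^2 ≠ 0 := by
          norm_cast
          positivity
        have hconjβ : (starRingEnd ℂ) β = -d / ((r:ℂ)^2) := by
          rw [hβdef]
          simp [map_div₀, map_neg, map_pow, Complex.conj_ofReal]
        have horth : (inner ℂ (ξ + β • ζ) (β • ζ) : ℂ) = 0 := by
          rw [inner_smul_right, inner_add_left, inner_smul_left, hζζ, ← hddef, hconjβ, hβdef]
          field_simp
          rw [div_self (show (r:ℂ) ≠ 0 by exact_mod_cast hr.ne')]; ring
        have hpyth : ‖ξ + β • ζ‖^2 + ‖β • ζ‖^2 = 1 := by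
          have h1 : ξ = (ξ + β • ζ) + (-β) • ζ := by
            rw [neg_smul]; abel
          have h2 : ‖ξ‖^2 = ‖(ξ + β • ζ) + (-β) • ζ‖^2 := by rw [← h1]
          rw [hx] at h2
          rw [@norm_add_sq ℂ] at h2
          have h3 : (inner ℂ (ξ + β • ζ) ((-β) • ζ) : ℂ) = 0 := by
            rw [inner_smul_right]
            rw [inner_smul_right] at horth
            linear_combination (-1 : ℂ) * horth
          rw [h3] at h2
          simp only [map_zero, mul_zero, add_zero, norm_neg, neg_smul] at h2
          rw [one_pow] at h2
          linarith [h2]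
        have hβζ : ‖β • ζ‖^2 = p^2/r^2 := by
          rw [norm_smul, hβdef]
          rw [norm_div, norm_neg, RCLike.norm_conj]
          have : ‖((r:ℂ))^2‖ = r^2 := by
            rw [norm_pow, Complex.norm_real, Real.norm_eq_abs, abs_of_pos hr]
          rw [this, ← hpdef, ← hrdef]
          field_simp
        have hn2 : ‖ξ + β • ζ‖^2 = 1 - p^2/r^2 := by linarith
        have hm2 : r^2 ≤ M^2 * ‖ξ + β • ζ‖^2 := by
          have h4 : r^2 ≤ (M * ‖ξ + β • ζ‖)^2 := by
            have := mul_self_le_mul_self hr.le hm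
            nlinarith [this]
          nlinarith [h4]
        rw [hn2] at hm2
        have hr2 : (0:ℝ) < r^2 := by positivity
        have h6 := mul_le_mul_of_nonneg_right hm2 hr2.le
        have h7 : M ^ 2 * (1 - p ^ 2 / r ^ 2) * r ^ 2 = M ^ 2 * (r ^ 2 - p ^ 2) := by
          field_simp
        rw [h7] at h6
        nlinarith [h6]
      -- the decomposition estimate
      set w : H := η - ((starRingEnd ℂ) q) • ξ with hwdef
      have hξη : (inner ℂ ξ η : ℂ) = (starRingEnd ℂ) q := by
        rw [← inner_conj_symm, hxy]
      have hwξ : (inner ℂ w ξ : ℂ) = 0 := by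
        rw [hwdef, inner_sub_left, inner_smul_left, hxy, Complex.conj_conj,
          inner_self_eq_norm_sq_to_K (𝕜 := ℂ), hx]
        norm_num
      have hnw : ‖w‖^2 = 1 - ‖q‖^2 := by
        have h1 : ‖w‖^2 = ‖η‖^2 - 2*(inner ℂ η (((starRingEnd ℂ) q) • ξ) : ℂ).re
            + ‖((starRingEnd ℂ) q) • ξ‖^2 := by
          rw [hwdef, @norm_sub_sq ℂ]
          simp only [RCLike.re_to_complex]
        have h2 : (inner ℂ η (((starRingEnd ℂ) q) • ξ) : ℂ) = ((‖q‖^2 : ℝ) : ℂ) := by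
          rw [inner_smul_right, hxy, ← Complex.normSq_eq_conj_mul_self, Complex.normSq_eq_norm_sq]
        have h3 : ‖((starRingEnd ℂ) q) • ξ‖^2 = ‖q‖^2 := by
          rw [norm_smul, RCLike.norm_conj, hx, mul_one]
        rw [h1, h2, h3, hy]
        simp only [RCLike.re_to_complex, Complex.ofReal_re, RCLike.ofReal_re]
        ring
      have hzdec : z = q * d + inner ℂ w ζ := by
        have h1 : η = w + ((starRingEnd ℂ) q) • ξ := by rw [hwdef]; abel
        rw [hz, h1, inner_add_left, inner_smul_left]
        simp only [RingHomCompTriple.comp_apply, Complex.conj_conj, RingHom.id_apply]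
        rw [← hddef]
        ring
      have hwζ : ‖(inner ℂ w ζ : ℂ)‖ ≤ ‖w‖ * Real.sqrt (r^2 - p^2) := by
        have h1 : (inner ℂ w (d • ξ) : ℂ) = 0 := by
          rw [inner_smul_right, hwξ, mul_zero]
        have h2 : (inner ℂ w ζ : ℂ) = inner ℂ w (ζ - d • ξ) := by
          rw [inner_sub_right, h1, sub_zero]
        have h4 : (inner ℂ ζ (d • ξ) : ℂ) = ((p^2 : ℝ) : ℂ) := by
          rw [inner_smul_right, ← inner_conj_symm ζ ξ, ← hddef, Complex.mul_conj,
            Complex.normSq_eq_norm_sq, ← hpdef]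
        have h3 : ‖ζ - d • ξ‖^2 = r^2 - p^2 := by
          rw [@norm_sub_sq ℂ, h4]
          have h5 : ‖d • ξ‖^2 = p^2 := by
            rw [norm_smul, hx, mul_one, ← hpdef]
          rw [h5, ← hrdef]
          simp only [RCLike.re_to_complex, Complex.ofReal_re, RCLike.ofReal_re]
          ring
        rw [h2]
        calc ‖(inner ℂ w (ζ - d • ξ) : ℂ)‖ ≤ ‖w‖ * ‖ζ - d • ξ‖ := norm_inner_le_norm _ _
          _ = ‖w‖ * Real.sqrt (r^2 - p^2) := by
              rw [← Real.sqrt_sq (norm_nonneg (ζ - d • ξ)), h3]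
      -- conclude
      have hws : ‖w‖ = s := by
        rw [← Real.sqrt_sq (norm_nonneg w), hnw, hsdef]
      have habs : ‖z‖ ≤ ‖q‖ * p + s * Real.sqrt (r^2 - p^2) := by
        rw [hzdec]
        calc ‖q * d + inner ℂ w ζ‖
            ≤ ‖q * d‖ + ‖inner ℂ w ζ‖ := norm_add_le _ _
          _ = ‖q‖ * p + ‖(inner ℂ w ζ : ℂ)‖ := by
              rw [norm_mul, hpdef]
          _ ≤ ‖q‖ * p + s * Real.sqrt (r^2 - p^2) := by
              rw [← hws]; exact add_le_add_right hwζ _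
      exact le_trans habs (keyIneq hp0 hr.le hQ0 hs0 hQs hM0 hcon hpr)
  · -- circularity
    set RA : Submodule ℂ H := LinearMap.range A.toLinearMap with hRAdef
    haveI : CompleteSpace RA := hclosed.completeSpace_coe
    have hSrange : ∀ v : H, S v ∈ RA := by
      intro v
      set b : H := S v - (RA.orthogonalProjectionOnto (S v) : H) with hbdef
      have hb : b ∈ RAᗮ := Submodule.sub_starProjection_mem_orthogonal (K := RA) (S v)
      have hAb : (inner ℂ (A b) b : ℂ) = 0 :=
        Submodule.inner_right_of_mem_orthogonal (LinearMap.mem_range_self A.toLinearMap b) hb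
      have hSb : S b = 0 := by
        have h1 : (inner ℂ (S b) (S b) : ℂ) = 0 := by
          rw [hSadj, hSsq, ← inner_conj_symm, hAb, map_zero]
        exact inner_self_eq_zero.1 h1
      have hb0 : b = 0 := by
        have h1 : (inner ℂ b b : ℂ) = 0 := by
          have h2 : (inner ℂ (S v) b : ℂ) = 0 := by
            rw [hSadj, hSb, inner_zero_right]
          have h3 : (inner ℂ ((RA.orthogonalProjectionOnto (S v) : H)) b : ℂ) = 0 :=
            Submodule.inner_right_of_mem_orthogonal (SetLike.coe_mem _) hb
          calc (inner ℂ b b : ℂ) = inner ℂ (S v - (RA.orthogonalProjectionOnto (S v) : H)) b := by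
                rw [← hbdef]
            _ = 0 := by rw [inner_sub_left, h2, h3, sub_zero]
        exact inner_self_eq_zero.1 h1
      have : S v = (RA.orthogonalProjectionOnto (S v) : H) := by
        have := sub_eq_zero.1 (hbdef ▸ hb0 : S v - (RA.orthogonalProjectionOnto (S v) : H) = 0)
        exact this
      rw [this]
      exact SetLike.coe_mem _
    set N : Submodule ℂ H := LinearMap.range (S.comp T).toLinearMap with hNdef
    set K : Submodule ℂ H := RA ⊓ N.topologicalClosure with hKdef
    have hKclosed : IsClosed (K : Set H) := by
      have h1 : (K : Set H) = (RA : Set H) ∩ (N.topologicalClosure : Set H) := rfl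
      rw [h1]
      exact hclosed.inter N.isClosed_topologicalClosure
    haveI : CompleteSpace K := hKclosed.completeSpace_coe
    have hKpre : ∀ ξ ∈ K, ∃ u : H, S u = ξ ∧ S (T u) = 0 := by
      rintro ξ ⟨hξA, hξN⟩
      obtain ⟨v, hv⟩ := hξA
      refine ⟨S v, by rw [hSsq]; exact hv, ?_⟩
      have hmem : ξ ∈ closure (N : Set H) := by
        rwa [← Submodule.topologicalClosure_coe]
      have hle : ∀ ε : ℝ, 0 < ε → ‖S (T (S v))‖ ≤ c * ε := by
        intro ε hε
        obtain ⟨b, hbN, hdist⟩ := Metric.mem_closure_iff.1 hmem ε hε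
        obtain ⟨wv, hwv⟩ := hbN
        have h1 : S (T (S v)) = S (T (S v - T wv)) := by
          rw [map_sub, map_sub, hST2, sub_zero]
        have hv' : A v = ξ := hv
        have hwv' : S (T wv) = b := hwv
        have h2 : S (S v - T wv) = ξ - b := by
          rw [map_sub, hSsq, hv', hwv']
        calc ‖S (T (S v))‖ = ‖S (T (S v - T wv))‖ := by rw [h1]
          _ ≤ c * ‖S (S v - T wv)‖ := hTS _
          _ = c * ‖ξ - b‖ := by rw [h2]
          _ = c * dist ξ b := by rw [dist_eq_norm]
          _ ≤ c * ε := mul_le_mul_of_nonneg_left hdist.le hc.le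
      have h0 : ‖S (T (S v))‖ ≤ 0 := by
        by_contra hcon
        push_neg at hcon
        have h1 := hle (‖S (T (S v))‖ / (2 * c)) (by positivity)
        rw [mul_div_assoc'] at h1
        have h2 : c * ‖S (T (S v))‖ / (2 * c) = ‖S (T (S v))‖ / 2 := by
          field_simp
        rw [h2] at h1
        linarith
      exact norm_eq_zero.1 (le_antisymm h0 (norm_nonneg _))
    intro lam hlam θ
    obtain ⟨x, y, hx, hy, hxy, hl⟩ := hlam
    rw [hsn] at hx hy
    rw [hsip] at hxy hl
    set e : ℂ := Complex.exp (θ * Complex.I) with hedef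
    have he : ‖e‖ = 1 := by
      rw [hedef, Complex.norm_exp_ofReal_mul_I]
    set ξ := S x with hξdef
    set η := S y with hηdef
    set ζ := S (T x) with hζdef
    have hζK : ζ ∈ K := by
      constructor
      · exact hSrange (T x)
      · exact N.le_topologicalClosure ⟨x, rfl⟩
    obtain ⟨u, hu1, hu2⟩ := hKpre _ (SetLike.coe_mem (K.orthogonalProjectionOnto ξ))
    obtain ⟨v2, hv2⟩ := (SetLike.coe_mem (K.orthogonalProjectionOnto η)).1
    set w : H := S v2 with hwdef
    have hw1 : S w = (K.orthogonalProjectionOnto η : H) := by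
      rw [hwdef, hSsq]
      exact hv2
    set x' : H := e • x + (1 - e) • u with hx'def
    set y' : H := e • y + (1 - e) • w with hy'def
    have hSx' : S x' = e • (ξ - (K.orthogonalProjectionOnto ξ : H)) + (K.orthogonalProjectionOnto ξ : H) := by
      rw [hx'def, map_add, map_smul, map_smul, hu1, ← hξdef]
      rw [smul_sub, sub_smul, one_smul]
      abel
    have hSy' : S y' = e • (η - (K.orthogonalProjectionOnto η : H)) + (K.orthogonalProjectionOnto η : H) := by
      rw [hy'def, map_add, map_smul, map_smul, hw1, ← hηdef]
      rw [smul_sub, sub_smul, one_smul]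
      abel
    have hSTx' : S (T x') = e • ζ := by
      rw [hx'def, map_add, map_smul, map_smul, map_add, map_smul, map_smul, hu2, smul_zero,
        add_zero, ← hζdef]
    refine ⟨x', y', ?_, ?_, ?_, ?_⟩
    · rw [hsn, hSx']
      have := rot_inner K he ξ ξ
      have hnrm := norm_eq_of_inner_self_eq this
      rw [hnrm, hx]
    · rw [hsn, hSy']
      have := rot_inner K he η η
      have hnrm := norm_eq_of_inner_self_eq this
      rw [hnrm, hy]
    · rw [hsip, hSx', hSy', rot_inner K he η ξ, hxy]
    · rw [hsip, hSTx', hSy', rot_inner_mem K e η hζK, hl]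
end
end
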